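/- arXiv:1110.3493 — 4 statements merged into one kernel-verified Lean document; each statement's English description precedes it below -/
import Mathlib

section
/- For every integer N ≥ 2, ∑_{ν=1}^{N-1} ζ₂(2N-2ν-1, 2ν+1) = (1/4) ζ(2N). -/
open scoped BigOperators

open Finset Filter Topology

noncomputable def Hh (n : ℕ) : ℝ := ∑ i ∈ range n, 1/((i:ℝ)+1)

lemma Hh_succ (n : ℕ) : Hh (n+1) = Hh n + 1/((n:ℝ)+1) := Finset.sum_range_succ _ n

lemma Hh_diff (X m : ℕ) : Hh (X + m) - Hh X = ∑ i ∈ range m, 1/((X:ℝ)+i+1) := by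
  induction m with
  | zero => simp
  | succ m ih =>
    rw [show X + (m+1) = (X+m)+1 from rfl, Hh_succ, sum_range_succ, ← ih]
    push_cast; ring

lemma Hh_diff_tendsto (m : ℕ) :
    Tendsto (fun X => Hh (X + m) - Hh X) atTop (𝓝 0) := by
  refine squeeze_zero (f := fun X => Hh (X + m) - Hh X) (g := fun X => (m:ℝ) * (1/((X:ℝ)+1))) (fun X => ?_) (fun X => ?_) ?_
  · rw [Hh_diff]; positivity
  · rw [Hh_diff]
    calc ∑ i ∈ range m, 1/((X:ℝ)+i+1) ≤ ∑ i ∈ range m, 1/((X:ℝ)+1) := by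
          apply Finset.sum_le_sum; intro i _
          apply one_div_le_one_div_of_le (by positivity); push_cast; linarith [Nat.cast_nonneg (α := ℝ) i]
      _ = (m:ℝ) * (1/((X:ℝ)+1)) := by rw [Finset.sum_const, card_range]; ring
  · simpa using tendsto_one_div_add_atTop_nhds_zero_nat.const_mul (m:ℝ)

lemma summable_shift_sq : Summable (fun n : ℕ => 1/((n:ℝ)+1)^2) := by
  have := (summable_nat_add_iff (f := fun n : ℕ => 1/(n:ℝ)^2) 1).2
    (Real.summable_one_div_nat_pow.2 one_lt_two)
  simpa using this

lemma summable_base : Summable (fun p : ℕ × ℕ => 1/((p.1:ℝ)+1)^2 * (1/((p.2:ℝ)+1)^2)) := by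
  apply Summable.mul_of_nonneg summable_shift_sq summable_shift_sq <;>
    · intro n; positivity

/-- key comparison helper -/
lemma nat_frac_le (a b d : ℕ) (hb : 0 < b) (hd : 0 < d) (h : a * d ≤ b) :
    (a:ℝ)/(b:ℝ) ≤ 1/(d:ℝ) := by
  rw [div_le_div_iff₀ (by positivity) (by positivity)]
  have := (Nat.cast_le (α := ℝ)).2 h
  push_cast at this ⊢
  linarith

/-- Lemma B: the inner telescoping sum for part 2. -/
lemma hasSum_part2 (m : ℕ) (hm : 1 ≤ m) :
    HasSum (fun n : ℕ => 1/(((n:ℝ)+1) * ((m:ℝ)+n+1) * (2*(m:ℝ)+n+1)))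
      ((2*Hh m - Hh (2*m))/(2*(m:ℝ)^2)) := by
  have hm0 : (0:ℝ) < (m:ℝ) := by exact_mod_cast hm
  set f : ℕ → ℝ := fun n => 1/(((n:ℝ)+1) * ((m:ℝ)+n+1) * (2*(m:ℝ)+n+1)) with hf
  have hsum : Summable f := by
    apply Summable.of_nonneg_of_le (fun n => by positivity) (fun n => ?_) summable_shift_sq
    rw [hf]
    simp only []
    have h1 : (0:ℝ) < (n:ℝ)+1 := by positivity
    have h2 : (n:ℝ)+1 ≤ (m:ℝ)+n+1 := by linarith
    have h3 : (1:ℝ) ≤ 2*(m:ℝ)+n+1 := by linarith [Nat.cast_nonneg (α := ℝ) n]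
    apply one_div_le_one_div_of_le (by positivity)
    calc ((n:ℝ)+1)^2 = ((n:ℝ)+1)*((n:ℝ)+1)*1 := by ring
      _ ≤ ((n:ℝ)+1) * ((m:ℝ)+n+1) * (2*(m:ℝ)+n+1) := by
          apply mul_le_mul (by nlinarith) h3 (by norm_num) (by positivity)
  -- partial sums formula
  have hps : ∀ X : ℕ, ∑ n ∈ range X, f n =
      (1/(2*(m:ℝ)^2)) * (2*Hh m - Hh (2*m)) +
      (1/(2*(m:ℝ)^2)) * ((Hh (X + 2*m) - Hh X) - 2*((Hh (X + m) - Hh X))) := by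
    intro X
    induction X with
    | zero =>
      have h0 : Hh 0 = 0 := by simp [Hh]
      simp only [range_zero, sum_empty, h0]
      ring
    | succ X ih =>
      rw [sum_range_succ, ih, hf]
      have e1 : X + 1 + m = (X + m) + 1 := by omega
      have e2 : X + 1 + 2*m = (X + 2*m) + 1 := by omega
      rw [e1, e2, Hh_succ, Hh_succ, Hh_succ]
      have hx1 : ((X:ℝ)+1) ≠ 0 := by positivity
      have hx2 : ((m:ℝ)+X+1) ≠ 0 := by positivity
      have hx3 : (2*(m:ℝ)+X+1) ≠ 0 := by positivity
      have hxm : ((X:ℝ)+(m:ℝ)+1) ≠ 0 := by positivity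
      have hxm2 : ((X:ℝ)+2*(m:ℝ)+1) ≠ 0 := by positivity
      push_cast
      field_simp
      ring
  -- limit of partial sums
  have hlim : Tendsto (fun X => ∑ n ∈ range X, f n) atTop
      (𝓝 ((2*Hh m - Hh (2*m))/(2*(m:ℝ)^2))) := by
    simp only [hps]
    have h0 : Tendsto (fun X : ℕ => (1/(2*(m:ℝ)^2)) *
        ((Hh (X + 2*m) - Hh X) - 2*((Hh (X + m) - Hh X)))) atTop (𝓝 0) := by
      have := ((Hh_diff_tendsto (2*m)).sub ((Hh_diff_tendsto m).const_mul 2)).const_mul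
        (1/(2*(m:ℝ)^2))
      simpa using this
    have := h0.const_add ((1/(2*(m:ℝ)^2)) * (2*Hh m - Hh (2*m)))
    simpa [div_eq_mul_inv, mul_comm] using this
  have := hsum.hasSum.tendsto_sum_nat
  have heq := tendsto_nhds_unique this hlim
  rw [← heq]
  exact hsum.hasSum

/-- Lemma C: the finite partial-fraction sum for part 1. -/
lemma sumC (d : ℕ) :
    ∑ j ∈ range d, ((j:ℝ)+1)/(((j:ℝ)+1)^2 - ((d:ℝ)+1)^2)
      = -(1/2)*(Hh d + Hh (d+1) - Hh (2*d+1)) := by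
  have key : ∀ j ∈ range d, ((j:ℝ)+1)/(((j:ℝ)+1)^2 - ((d:ℝ)+1)^2)
      = -(1/2)*(1/((d:ℝ)-j) - 1/((d:ℝ)+j+2)) := by
    intro j hj
    rw [mem_range] at hj
    have hjd : (j:ℝ) < (d:ℝ) := by exact_mod_cast hj
    have h1 : (0:ℝ) < (d:ℝ)-j := by linarith
    have h2 : (0:ℝ) < (d:ℝ)+j+2 := by positivity
    have hne : ((j:ℝ)+1)^2 - ((d:ℝ)+1)^2 ≠ 0 := by nlinarith
    field_simp
    ring
  rw [sum_congr rfl key]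
  have e1 : ∑ j ∈ range d, (1:ℝ)/((d:ℝ)-j) = Hh d := by
    have := sum_range_reflect (fun j => 1/((j:ℝ)+1)) d
    rw [Hh, ← this]
    apply sum_congr rfl
    intro j hj
    rw [mem_range] at hj
    congr 1
    have : ((d - 1 - j : ℕ):ℝ) = (d:ℝ) - 1 - j := by
      have : d - 1 - j = d - (1 + j) := by omega
      rw [this, Nat.cast_sub (by omega)]
      push_cast; ring
    rw [this]; ring
  have e2 : ∑ j ∈ range d, (1:ℝ)/((d:ℝ)+j+2) = Hh (2*d+1) - Hh (d+1) := by
    have hsub : Hh (2*d+1) - Hh (d+1) = ∑ i ∈ Ico (d+1) (2*d+1), 1/((i:ℝ)+1) := by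
      rw [Hh, Hh, Finset.sum_Ico_eq_sub _ (show d+1 ≤ 2*d+1 by omega)]
    rw [hsub, sum_Ico_eq_sum_range]
    have : 2*d+1 - (d+1) = d := by omega
    rw [this]
    apply sum_congr rfl
    intro j _
    push_cast
    ring_nf
  rw [← Finset.mul_sum, Finset.sum_sub_distrib, e1, e2]
  ring

/-- The per-index combination identity. -/
lemma per_i (K : ℕ) (d : ℕ) :
    (1/((d:ℝ)+1)^(K+2)) * (-(1/2)*(Hh d + Hh (d+1) - Hh (2*d+1)))
      + (1/((d:ℝ)+1)^K) * ((2*Hh (d+1) - Hh (2*(d+1)))/(2*((d:ℝ)+1)^2))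
    = (1/4) * (1/((d:ℝ)+1)^(K+3)) := by
  have h2 : 2*(d+1) = (2*d+1)+1 := by omega
  rw [h2, Hh_succ (2*d+1), Hh_succ d]
  have hx : ((d:ℝ)+1) ≠ 0 := by positivity
  have hy : ((2*d+1:ℕ):ℝ)+1 = 2*((d:ℝ)+1) := by push_cast; ring
  rw [hy]
  field_simp
  ring

/-- Pointwise geometric-sum identity (complex). -/
lemma pointwise_geom (N : ℕ) (hN : 2 ≤ N) (a b : ℂ) (ha : a ≠ 0) (hb : b ≠ 0)
    (hab : a^2 - b^2 ≠ 0) :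
    ∑ ν ∈ Finset.Icc 1 (N-1), 1/(a^(2*N-2*ν-1) * b^(2*ν+1)) =
      -(a/((b^2-a^2) * b^(2*N-1))) + 1/(a^(2*N-3) * b * (b^2 - a^2)) := by
  obtain ⟨P, rfl⟩ : ∃ P, N = P + 2 := ⟨N - 2, by omega⟩
  have hba : b^2 - a^2 ≠ 0 := fun h => hab (by rw [← neg_sub] at h; simpa using neg_eq_zero.1 h)
  have key : ∀ ν ∈ Finset.Icc 1 (P+1), 1/(a^(2*(P+2)-2*ν-1) * b^(2*ν+1)) =
      (a^2/b^2)^ν * (a/(b*a^(2*P+4))) := by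
    intro ν hν
    rw [Finset.mem_Icc] at hν
    have hle : 2*ν+1 ≤ 2*(P+2) := by omega
    have hsub : 2*(P+2)-2*ν-1 = 2*(P+2) - (2*ν+1) := by omega
    rw [hsub, pow_sub₀ a ha hle]
    rw [div_pow, ← pow_mul, ← pow_mul]
    have h1 : a^(2*ν+1) ≠ 0 := pow_ne_zero _ ha
    have h2 : b^(2*ν+1) ≠ 0 := pow_ne_zero _ hb
    field_simp
    ring
  have hred : P + 2 - 1 = P + 1 := by omega
  rw [hred, Finset.sum_congr rfl key, ← Finset.sum_mul]
  set x : ℂ := a^2/b^2 with hxdef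
  have hx1 : x - 1 ≠ 0 := by
    have : x - 1 = (a^2 - b^2)/b^2 := by
      rw [hxdef]; field_simp
    rw [this]
    exact div_ne_zero hab (pow_ne_zero _ hb)
  have hg : (∑ k ∈ range (P+1), x^k) = (x^(P+1)-1)/(x-1) := by
    rw [eq_div_iff hx1]; exact geom_sum_mul x (P+1)
  have hsum : ∑ ν ∈ Finset.Icc 1 (P+1), x^ν = x * ((x^(P+1) - 1)/(x-1)) := by
    rw [show Finset.Icc 1 (P+1) = Finset.Ico 1 (P+2) from (Finset.Ico_add_one_right_eq_Icc 1 (P+1)).symm,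
      sum_Ico_eq_sum_range, show P + 2 - 1 = P + 1 from by omega, ← hg, Finset.mul_sum]
    exact Finset.sum_congr rfl (fun k _ => by rw [pow_add, pow_one])
  rw [hsum]
  have e1 : 2*(P+2)-1 = (2*P+1)+2 := by omega
  have e2 : 2*(P+2)-3 = 2*P+1 := by omega
  have hxx : x - 1 = (a^2 - b^2)/b^2 := by rw [hxdef]; field_simp
  rw [e1, e2, hxx, hxdef]
  rw [div_pow, ← pow_mul, ← pow_mul, show 2*(P+1) = (2*P+1)+1 from by omega,
    show 2*P+4 = (2*P+1)+3 from by omega]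
  rw [pow_add a (2*P+1) 1, pow_add b (2*P+1) 1, pow_add a (2*P+1) 3, pow_add b (2*P+1) 2]
  have hu : a^(2*P+1) ≠ 0 := pow_ne_zero _ ha
  have hv : b^(2*P+1) ≠ 0 := pow_ne_zero _ hb
  generalize a^(2*P+1) = u at hu ⊢
  generalize b^(2*P+1) = v at hv ⊢
  have hd1 : (b^2-a^2) * (v*b^2) ≠ 0 := by
    apply mul_ne_zero hba (mul_ne_zero hv (pow_ne_zero _ hb))
  have hd2 : u*b*(b^2-a^2) ≠ 0 :=
    mul_ne_zero (mul_ne_zero hu hb) hba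
  have hvb : v*b ≠ 0 := mul_ne_zero hv hb
  rw [pow_one, pow_one, div_sub_one hvb, div_div_eq_mul_div]
  rw [neg_div', div_add_div _ _ hd1 hd2, eq_div_iff (mul_ne_zero hd1 hd2)]
  have hD : -(a^3*u*v*b^6) + a^5*u*v*b^4 ≠ 0 := by
    have h : -(a^3*u*v*b^6) + a^5*u*v*b^4 = a^3*u*v*b^4*(a^2-b^2) := by ring
    rw [h]
    exact mul_ne_zero (mul_ne_zero (mul_ne_zero (mul_ne_zero
      (pow_ne_zero _ ha) hu) hv) (pow_ne_zero _ hb)) hab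
  field_simp
  ring

lemma nat_one_div_le (b d : ℕ) (hd : 0 < d) (h : d ≤ b) : (1:ℝ)/(b:ℝ) ≤ 1/(d:ℝ) :=
  one_div_le_one_div_of_le (by exact_mod_cast hd) (by exact_mod_cast h)

lemma base_eq (p : ℕ × ℕ) :
    1/((p.1:ℝ)+1)^2 * (1/((p.2:ℝ)+1)^2) = 1/((((p.1+1)^2*(p.2+1)^2 : ℕ)):ℝ) := by
  push_cast
  rw [div_mul_div_comm, one_mul]

lemma norm_zeta2_term (k1 k2 : ℕ) (h1 : 1 ≤ k1) (h2 : 3 ≤ k2) (p : ℕ × ℕ) :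
    ‖(1:ℂ)/(((p.1:ℂ)+1)^k1 * ((p.1:ℂ)+1+((p.2:ℂ)+1))^k2)‖
      ≤ 1/((p.1:ℝ)+1)^2 * (1/((p.2:ℝ)+1)^2) := by
  have ha : ((p.1:ℂ)+1) = (((p.1+1 : ℕ)):ℂ) := by push_cast; ring
  have hb : ((p.1:ℂ)+1+((p.2:ℂ)+1)) = (((p.1+p.2+2 : ℕ)):ℂ) := by push_cast; ring
  rw [hb, ha, norm_div, norm_one, norm_mul, norm_pow, norm_pow, Complex.norm_natCast,
    Complex.norm_natCast, base_eq]
  have hcast : ((p.1+1:ℕ):ℝ)^k1 * ((p.1+p.2+2:ℕ):ℝ)^k2 = (((p.1+1)^k1 * (p.1+p.2+2)^k2 : ℕ):ℝ) := by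
    push_cast; ring
  rw [hcast]
  apply nat_one_div_le _ _ (by positivity)
  set m := p.1 + 1
  set k := p.2 + 1
  have hMm : p.1+p.2+2 = m + k := by omega
  rw [hMm]
  calc m^2*k^2 = m*(m*(k*k)) := by ring
    _ ≤ m^k1 * ((m+k)*((m+k)*(m+k))) := by
        apply Nat.mul_le_mul (Nat.le_self_pow (by omega) m)
        apply Nat.mul_le_mul (by omega) (Nat.mul_le_mul (by omega) (by omega))
    _ = m^k1 * (m+k)^3 := by ring
    _ ≤ m^k1 * (m+k)^k2 := by
        apply Nat.mul_le_mul_left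
        exact Nat.pow_le_pow_right (by omega) h2

/-- nat inequality for F1 -/
lemma nat_ineq_F1 (K : ℕ) (hK : 1 ≤ K) (m k : ℕ) (hm : 1 ≤ m) (hk : 1 ≤ k) :
    m * ((m^2*k^2)) ≤ ((m+k)^2 - m^2) * (m+k)^(K+2) := by
  have hsub : (m+k)^2 - m^2 = k*(k+2*m) := by
    apply Nat.sub_eq_of_eq_add
    ring
  rw [hsub]
  calc m*(m^2*k^2) = (k*m)*(m*(m*k)) := by ring
    _ ≤ (k*(k+2*m))*((m+k)*((m+k)*(m+k))) := by
        apply Nat.mul_le_mul (Nat.mul_le_mul_left k (by omega))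
        apply Nat.mul_le_mul (by omega)
        exact Nat.mul_le_mul (by omega) (by omega)
    _ = (k*(k+2*m))*(m+k)^3 := by ring
    _ ≤ (k*(k+2*m))*(m+k)^(K+2) := by
        exact Nat.mul_le_mul_left _ (Nat.pow_le_pow_right (by omega) (by omega))

/-- nat inequality for F2 -/
lemma nat_ineq_F2 (K : ℕ) (hK : 1 ≤ K) (m k : ℕ) (hm : 1 ≤ m) (hk : 1 ≤ k) :
    1 * (m^2*k^2) ≤ m^K * (m+k) * ((m+k)^2 - m^2) := by
  have hsub : (m+k)^2 - m^2 = k*(k+2*m) := by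
    apply Nat.sub_eq_of_eq_add
    ring
  rw [hsub, one_mul]
  calc m^2*k^2 = (m*m)*(k*k) := by ring
    _ ≤ (m^K*(m+k))*(k*(k+2*m)) := by
        apply Nat.mul_le_mul
        · exact Nat.mul_le_mul (Nat.le_self_pow (by omega) m) (by omega)
        · exact Nat.mul_le_mul_left k (by omega)
    _ = m^K * (m+k) * (k*(k+2*m)) := by ring

lemma abs_F1_le (K : ℕ) (hK : 1 ≤ K) (p : ℕ × ℕ) :
    |(-( ((p.1+1 : ℕ):ℝ) / (( ((p.1+p.2+2)^2 - (p.1+1)^2) * (p.1+p.2+2)^(K+2) : ℕ) : ℝ) ))|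
      ≤ 1/((p.1:ℝ)+1)^2 * (1/((p.2:ℝ)+1)^2) := by
  rw [abs_neg, abs_of_nonneg (by positivity), base_eq]
  apply nat_frac_le _ _ _ ?_ (by positivity)
  · have := nat_ineq_F1 K hK (p.1+1) (p.2+1) (by omega) (by omega)
    calc (p.1+1) * ((p.1+1)^2*(p.2+1)^2) ≤ (((p.1+1)+(p.2+1))^2 - (p.1+1)^2) * ((p.1+1)+(p.2+1))^(K+2) := this
      _ = ((p.1+p.2+2)^2 - (p.1+1)^2) * (p.1+p.2+2)^(K+2) := by rw [show (p.1+1)+(p.2+1) = p.1+p.2+2 from by omega]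
  · have h2 : (p.1+1)^2 < (p.1+p.2+2)^2 := by
      apply Nat.pow_lt_pow_left (by omega) (by omega)
    have h3 : 0 < (p.1+p.2+2)^(K+2) := Nat.pow_pos (by omega)
    exact Nat.mul_pos (by omega) h3

lemma abs_F2_le (K : ℕ) (hK : 1 ≤ K) (p : ℕ × ℕ) :
    |((1:ℝ) / (( (p.1+1)^K * (p.1+p.2+2) * ((p.1+p.2+2)^2 - (p.1+1)^2) : ℕ) : ℝ))|
      ≤ 1/((p.1:ℝ)+1)^2 * (1/((p.2:ℝ)+1)^2) := by
  rw [abs_of_nonneg (by positivity), base_eq]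
  apply nat_one_div_le _ _ (by positivity)
  have := nat_ineq_F2 K hK (p.1+1) (p.2+1) (by omega) (by omega)
  calc (p.1+1)^2*(p.2+1)^2 = 1*((p.1+1)^2*(p.2+1)^2) := by ring
    _ ≤ (p.1+1)^K * ((p.1+1)+(p.2+1)) * (((p.1+1)+(p.2+1))^2 - (p.1+1)^2) := this
    _ = (p.1+1)^K * (p.1+p.2+2) * ((p.1+p.2+2)^2 - (p.1+1)^2) := by rw [show (p.1+1)+(p.2+1) = p.1+p.2+2 from by omega]

lemma summable_F1 (K : ℕ) (hK : 1 ≤ K) :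
    Summable (fun p : ℕ × ℕ =>
      -( ((p.1+1 : ℕ):ℝ) / (( ((p.1+p.2+2)^2 - (p.1+1)^2) * (p.1+p.2+2)^(K+2) : ℕ) : ℝ) )) := by
  apply Summable.of_norm_bounded summable_base
  intro p
  rw [Real.norm_eq_abs]
  exact abs_F1_le K hK p

lemma summable_F2 (K : ℕ) (hK : 1 ≤ K) :
    Summable (fun p : ℕ × ℕ =>
      (1:ℝ) / (( (p.1+1)^K * (p.1+p.2+2) * ((p.1+p.2+2)^2 - (p.1+1)^2) : ℕ) : ℝ)) := by
  apply Summable.of_norm_bounded summable_base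
  intro p
  rw [Real.norm_eq_abs]
  exact abs_F2_le K hK p

lemma hasSum_F2_fiber (K : ℕ) (i : ℕ) :
    HasSum (fun n : ℕ => (1:ℝ) / (( (i+1)^K * (i+n+2) * ((i+n+2)^2 - (i+1)^2) : ℕ) : ℝ))
      ((1/((i:ℝ)+1)^K) * ((2*Hh (i+1) - Hh (2*(i+1)))/(2*((i:ℝ)+1)^2))) := by
  have base := (hasSum_part2 (i+1) (by omega)).mul_left (1/((i:ℝ)+1)^K)
  have hfun : (fun n : ℕ => (1:ℝ) / (( (i+1)^K * (i+n+2) * ((i+n+2)^2 - (i+1)^2) : ℕ) : ℝ))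
      = fun n : ℕ => (1/((i:ℝ)+1)^K) *
        (1/(((n:ℝ)+1) * (((i+1:ℕ):ℝ)+(n:ℝ)+1) * (2*((i+1:ℕ):ℝ)+(n:ℝ)+1))) := by
    funext n
    rw [div_mul_div_comm, one_mul]
    congr 1
    have hle : (i+1)^2 ≤ (i+n+2)^2 := Nat.pow_le_pow_left (by omega) 2
    push_cast [Nat.cast_sub hle]
    ring
  rw [hfun]
  have hval : ((2*Hh (i+1) - Hh (2*(i+1)))/(2*(((i+1:ℕ)):ℝ)^2))
      = ((2*Hh (i+1) - Hh (2*(i+1)))/(2*((i:ℝ)+1)^2)) := by push_cast; ring_nf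
  rw [hval] at base
  exact base

lemma hasSum_F1_fiber (K : ℕ) (i : ℕ) :
    HasSum (fun j : ℕ => if j < i then
        -( ((j+1 : ℕ):ℝ) / (( ((i+1)^2 - (j+1)^2) * (i+1)^(K+2) : ℕ) : ℝ) ) else 0)
      ((1/((i:ℝ)+1)^(K+2)) * (-(1/2)*(Hh i + Hh (i+1) - Hh (2*i+1)))) := by
  have hs : HasSum (fun j : ℕ => if j < i then
      -( ((j+1 : ℕ):ℝ) / (( ((i+1)^2 - (j+1)^2) * (i+1)^(K+2) : ℕ) : ℝ) ) else 0)
      (∑ j ∈ range i, (if j < i then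
        -( ((j+1 : ℕ):ℝ) / (( ((i+1)^2 - (j+1)^2) * (i+1)^(K+2) : ℕ) : ℝ) ) else 0)) := by
    apply hasSum_sum_of_ne_finset_zero
    intro j hj
    rw [mem_range] at hj
    rw [if_neg hj]
  convert hs using 1
  rw [eq_comm]
  have key : ∀ j ∈ range i, (if j < i then
      -( ((j+1 : ℕ):ℝ) / (( ((i+1)^2 - (j+1)^2) * (i+1)^(K+2) : ℕ) : ℝ) ) else 0)
      = (1/((i:ℝ)+1)^(K+2)) * (((j:ℝ)+1)/(((j:ℝ)+1)^2 - ((i:ℝ)+1)^2)) := by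
    intro j hj
    rw [mem_range] at hj
    rw [if_pos hj]
    have hle : (j+1)^2 ≤ (i+1)^2 := Nat.pow_le_pow_left (by omega) 2
    have hlt : ((j:ℝ)+1)^2 < ((i:ℝ)+1)^2 := by
      have : (j:ℝ) < (i:ℝ) := by exact_mod_cast hj
      nlinarith
    have hne : ((j:ℝ)+1)^2 - ((i:ℝ)+1)^2 ≠ 0 := by
      intro h; nlinarith
    have hne2 : ((i:ℝ)+1)^2 - ((j:ℝ)+1)^2 ≠ 0 := by
      intro h; nlinarith
    have hcast : (( ((i+1)^2 - (j+1)^2) * (i+1)^(K+2) : ℕ) : ℝ)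
        = (((i:ℝ)+1)^2 - ((j:ℝ)+1)^2) * ((i:ℝ)+1)^(K+2) := by
      push_cast [Nat.cast_sub hle]
      ring
    rw [hcast]
    have hx : ((i:ℝ)+1) ≠ 0 := by positivity
    push_cast
    field_simp
    ring
  rw [sum_congr rfl key, ← Finset.mul_sum, sumC i]

/-- Double zeta value `ζ₂(k₁,k₂) = ∑_{1 ≤ m < m+n} 1/(m^{k₁} (m+n)^{k₂})`. -/
noncomputable def zeta2 (k1 k2 : ℕ) : ℂ :=
  ∑' p : ℕ × ℕ, 1 / (((p.1 : ℂ) + 1) ^ k1 * ((p.1 : ℂ) + 1 + ((p.2 : ℂ) + 1)) ^ k2)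

theorem GKZ_odd_sum_formula (N : ℕ) (hN : 2 ≤ N) :
    ∑ ν ∈ Finset.Icc 1 (N - 1), zeta2 (2 * N - 2 * ν - 1) (2 * ν + 1)
      = (1 / 4 : ℂ) * riemannZeta (2 * N) := by
  obtain ⟨K, hKdef⟩ : ∃ K, K = 2*N-3 := ⟨2*N-3, rfl⟩
  have hK : 1 ≤ K := by omega
  have eK1 : 2*N - 1 = K + 2 := by omega
  have eK3 : 2*N - 3 = K := by omega
  have eN : 2*N = K + 3 := by omega
  -- the two split functions (real)
  set F1 : ℕ × ℕ → ℝ := fun p =>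
    -( ((p.1+1 : ℕ):ℝ) / (( ((p.1+p.2+2)^2 - (p.1+1)^2) * (p.1+p.2+2)^(K+2) : ℕ) : ℝ) ) with hF1def
  set F2 : ℕ × ℕ → ℝ := fun p =>
    (1:ℝ) / (( (p.1+1)^K * (p.1+p.2+2) * ((p.1+p.2+2)^2 - (p.1+1)^2) : ℕ) : ℝ) with hF2def
  have hsumF1 : Summable F1 := summable_F1 K hK
  have hsumF2 : Summable F2 := summable_F2 K hK
  -- Step 1: swap finite sum and tsum
  have hsummandsum : ∀ ν ∈ Finset.Icc 1 (N-1),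
      Summable (fun p : ℕ × ℕ =>
        1 / (((p.1 : ℂ) + 1) ^ (2*N-2*ν-1) * ((p.1 : ℂ) + 1 + ((p.2 : ℂ) + 1)) ^ (2*ν+1))) := by
    intro ν hν
    rw [Finset.mem_Icc] at hν
    apply Summable.of_norm_bounded summable_base
    exact norm_zeta2_term _ _ (by omega) (by omega)
  have step1 : ∑ ν ∈ Finset.Icc 1 (N - 1), zeta2 (2 * N - 2 * ν - 1) (2 * ν + 1)
      = ∑' p : ℕ × ℕ, ∑ ν ∈ Finset.Icc 1 (N-1),
          1 / (((p.1 : ℂ) + 1) ^ (2*N-2*ν-1) * ((p.1 : ℂ) + 1 + ((p.2 : ℂ) + 1)) ^ (2*ν+1)) := by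
    rw [Summable.tsum_finsetSum hsummandsum]
    rfl
  -- Step 2: pointwise identity
  have step2 : ∀ p : ℕ × ℕ, ∑ ν ∈ Finset.Icc 1 (N-1),
      1 / (((p.1 : ℂ) + 1) ^ (2*N-2*ν-1) * ((p.1 : ℂ) + 1 + ((p.2 : ℂ) + 1)) ^ (2*ν+1))
      = ((F1 p : ℝ) : ℂ) + ((F2 p : ℝ) : ℂ) := by
    intro p
    have ha : ((p.1:ℂ)+1) ≠ 0 := by
      intro h
      have := congrArg Complex.re h
      simp at this
      linarith [Nat.cast_nonneg (α := ℝ) p.1]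
    have hb : ((p.1:ℂ)+1+((p.2:ℂ)+1)) ≠ 0 := by
      intro h
      have := congrArg Complex.re h
      simp at this
      have h1 := Nat.cast_nonneg (α := ℝ) p.1
      have h2 := Nat.cast_nonneg (α := ℝ) p.2
      linarith
    have hab : ((p.1:ℂ)+1)^2 - ((p.1:ℂ)+1+((p.2:ℂ)+1))^2 ≠ 0 := by
      rw [sub_ne_zero]
      intro h
      have : (((p.1+1 : ℕ)):ℂ)^2 = (((p.1+p.2+2 : ℕ)):ℂ)^2 := by
        push_cast
        convert h using 2 <;> ring
      rw [← Nat.cast_pow, ← Nat.cast_pow, Nat.cast_inj] at this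
      have hlt : (p.1+1)^2 < (p.1+p.2+2)^2 := Nat.pow_lt_pow_left (by omega) (by omega)
      omega
    rw [pointwise_geom N hN _ _ ha hb hab]
    have hle : (p.1+1)^2 ≤ (p.1+p.2+2)^2 := Nat.pow_le_pow_left (by omega) 2
    have hc1 : ((F1 p : ℝ) : ℂ)
        = -(((p.1:ℂ)+1)/(((((p.1:ℂ)+1+((p.2:ℂ)+1)))^2-((p.1:ℂ)+1)^2) * (((p.1:ℂ)+1+((p.2:ℂ)+1)))^(2*N-1))) := by
      rw [hF1def, eK1]
      push_cast [Nat.cast_sub hle]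
      ring
    have hc2 : ((F2 p : ℝ) : ℂ)
        = 1/(((p.1:ℂ)+1)^(2*N-3) * ((p.1:ℂ)+1+((p.2:ℂ)+1)) * ((((p.1:ℂ)+1+((p.2:ℂ)+1)))^2 - ((p.1:ℂ)+1)^2)) := by
      rw [hF2def, eK3]
      push_cast [Nat.cast_sub hle]
      ring
    rw [hc1, hc2]
  -- Step 3+4: split and cast
  have step34 : (∑' p : ℕ × ℕ, ∑ ν ∈ Finset.Icc 1 (N-1),
      1 / (((p.1 : ℂ) + 1) ^ (2*N-2*ν-1) * ((p.1 : ℂ) + 1 + ((p.2 : ℂ) + 1)) ^ (2*ν+1)))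
      = (((∑' p : ℕ × ℕ, F1 p) + (∑' p : ℕ × ℕ, F2 p) : ℝ) : ℂ) := by
    rw [tsum_congr step2, Summable.tsum_add ((Complex.summable_ofReal).2 hsumF1)
      ((Complex.summable_ofReal).2 hsumF2), ← Complex.ofReal_tsum, ← Complex.ofReal_tsum]
    push_cast
    ring
  -- Step 5: real computation
  set G : ℕ × ℕ → ℝ := fun x => if x.2 < x.1 then
    -( ((x.2+1 : ℕ):ℝ) / (( ((x.1+1)^2 - (x.2+1)^2) * (x.1+1)^(K+2) : ℕ) : ℝ) ) else 0 with hGdef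
  set e : ℕ × ℕ → ℕ × ℕ := fun q => (q.1+q.2+1, q.1) with hedef
  have hinj : Function.Injective e := by
    intro q r h
    simp only [hedef, Prod.ext_iff] at h ⊢
    omega
  have hcomp : ∀ q : ℕ × ℕ, G (e q) = F1 q := by
    intro q
    simp only [hedef, hGdef, hF1def]
    rw [if_pos (show q.1 < q.1+q.2+1 by omega)]
  have hsupp : Function.support G ⊆ Set.range e := by
    intro x hx
    rw [Function.mem_support] at hx
    have hlt : x.2 < x.1 := by
      by_contra hc
      apply hx
      simp only [hGdef]
      rw [if_neg hc]
    refine ⟨(x.2, x.1 - x.2 - 1), ?_⟩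
    rw [hedef]
    obtain ⟨x1, x2⟩ := x
    simp only [Prod.mk.injEq]
    refine ⟨?_, trivial⟩
    simp only [] at hlt
    omega
  have htF1G : ∑' q, F1 q = ∑' x, G x := by
    rw [← hinj.tsum_eq hsupp]
    exact tsum_congr (fun q => (hcomp q).symm)
  have hGsummable : Summable G := by
    rw [← hinj.summable_iff (fun x hx => Function.notMem_support.mp (fun h => hx (hsupp h)))]
    exact hsumF1.congr (fun q => (hcomp q).symm)
  have hfib1 : ∀ i : ℕ, HasSum (fun j => G (i, j))
      ((1/((i:ℝ)+1)^(K+2)) * (-(1/2)*(Hh i + Hh (i+1) - Hh (2*i+1)))) := by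
    intro i
    exact hasSum_F1_fiber K i
  have hfib2 : ∀ i : ℕ, HasSum (fun n => F2 (i, n))
      ((1/((i:ℝ)+1)^K) * ((2*Hh (i+1) - Hh (2*(i+1)))/(2*((i:ℝ)+1)^2))) := by
    intro i
    exact hasSum_F2_fiber K i
  have hS1 : HasSum (fun i : ℕ => (1/((i:ℝ)+1)^(K+2)) * (-(1/2)*(Hh i + Hh (i+1) - Hh (2*i+1))))
      (∑' x, G x) := HasSum.prod_fiberwise hGsummable.hasSum hfib1
  have hS2 : HasSum (fun i : ℕ => (1/((i:ℝ)+1)^K) * ((2*Hh (i+1) - Hh (2*(i+1)))/(2*((i:ℝ)+1)^2)))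
      (∑' p, F2 p) := HasSum.prod_fiberwise hsumF2.hasSum hfib2
  have hSsum := hS1.add hS2
  have hfun : (fun i : ℕ => (1/((i:ℝ)+1)^(K+2)) * (-(1/2)*(Hh i + Hh (i+1) - Hh (2*i+1)))
      + (1/((i:ℝ)+1)^K) * ((2*Hh (i+1) - Hh (2*(i+1)))/(2*((i:ℝ)+1)^2)))
      = fun i : ℕ => (1/4) * (1/((i:ℝ)+1)^(K+3)) := funext (fun i => per_i K i)
  rw [hfun] at hSsum
  have hreal : (∑' p : ℕ × ℕ, F1 p) + (∑' p : ℕ × ℕ, F2 p)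
      = (1/4) * ∑' i : ℕ, 1/((i:ℝ)+1)^(K+3) := by
    rw [htF1G, ← hSsum.tsum_eq, tsum_mul_left]
  -- Step 6: zeta value
  have hzeta : riemannZeta (2*(N:ℂ)) = ((∑' i : ℕ, 1/((i:ℝ)+1)^(K+3) : ℝ) : ℂ) := by
    rw [show (2*(N:ℂ)) = ((2*N : ℕ):ℂ) from by push_cast; ring]
    rw [zeta_nat_eq_tsum_of_gt_one (show 1 < 2*N by omega)]
    have hsupp0 : Function.support (fun n : ℕ => 1/(n:ℂ)^(2*N)) ⊆ Set.range Nat.succ := by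
      intro x hx
      rw [Function.mem_support] at hx
      rcases Nat.eq_zero_or_pos x with h0 | hp
      · exfalso
        apply hx
        rw [h0]
        simp only [Nat.cast_zero]
        rw [zero_pow (by omega), div_zero]
      · exact ⟨x-1, by omega⟩
    rw [← Nat.succ_injective.tsum_eq (f := fun n : ℕ => 1/(n:ℂ)^(2*N)) hsupp0,
      Complex.ofReal_tsum]
    apply tsum_congr
    intro n
    rw [eN]
    push_cast
    ring
  rw [step1, step34, hreal, hzeta]
  push_cast
  ring
end

section
/- For every positive integer k and every complex number x with |x| ≤ 1: ∑_{ν=2}^{k+1} ν ∑_{m,n≥1} x^n/(n^{k+2−ν}(m+n)^{ν+1}) + (k+1) ∑_{m,n≥1} x^n/(m(m+n)^{k+2}) + ∑_{m,n≥1} x^n/(m²(m+n)^{k+1}) − ∑_{m,n≥1} x^{m+n}/(m²(m+n)^{k+1}) = ∑_{n≥1} x^n/n^{k+3}. -/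
lemma poly_id : ∀ (k : ℕ) (m n : ℂ),
    (∑ ν ∈ Finset.Icc 2 (k + 1), (ν : ℂ) * m ^ 2 * n ^ (ν - 1) * (m + n) ^ (k + 2 - ν))
      + ((k : ℂ) + 1) * m * n ^ (k + 1) * (m + n) + n ^ (k + 1) * (m + n) ^ 2
      = (m + n) ^ (k + 3) - m ^ 2 * (m + n) ^ (k + 1) := by
  intro k
  induction k with
  | zero =>
    intro m n
    rw [Finset.Icc_eq_empty (by omega), Finset.sum_empty]
    ring
  | succ k ih =>
    intro m n
    rw [Finset.sum_Icc_succ_top (by omega : 2 ≤ k + 1 + 1)]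
    have hsplit : ∑ ν ∈ Finset.Icc 2 (k + 1), (ν : ℂ) * m ^ 2 * n ^ (ν - 1) * (m + n) ^ (k + 1 + 2 - ν)
        = (m + n) * ∑ ν ∈ Finset.Icc 2 (k + 1), (ν : ℂ) * m ^ 2 * n ^ (ν - 1) * (m + n) ^ (k + 2 - ν) := by
      rw [Finset.mul_sum]
      refine Finset.sum_congr rfl fun ν hν => ?_
      simp only [Finset.mem_Icc] at hν
      have h1 : k + 1 + 2 - ν = (k + 2 - ν) + 1 := by omega
      rw [h1, pow_succ]
      ring
    rw [hsplit]
    have e1 : k + 1 + 2 - (k + 2) = 1 := by omega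
    have e2 : (k + 2 : ℕ) - 1 = k + 1 := by omega
    rw [e1, e2]
    push_cast
    linear_combination (m + n) * ih m n

lemma alg_id (k : ℕ) (m n : ℂ) (hm : m ≠ 0) (hn : n ≠ 0) (hmn : m + n ≠ 0) :
    (∑ ν ∈ Finset.Icc 2 (k + 1), (ν : ℂ) / (n ^ (k + 2 - ν) * (m + n) ^ (ν + 1)))
      + ((k : ℂ) + 1) / (m * (m + n) ^ (k + 2)) + 1 / (m ^ 2 * (m + n) ^ (k + 1))
      = 1 / (n ^ (k + 1) * m ^ 2) - 1 / (n ^ (k + 1) * (m + n) ^ 2) := by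
  set D : ℂ := n ^ (k + 1) * m ^ 2 * (m + n) ^ (k + 3) with hD
  have hDne : D ≠ 0 := by
    apply mul_ne_zero (mul_ne_zero (pow_ne_zero _ hn) (pow_ne_zero _ hm)) (pow_ne_zero _ hmn)
  have h1 : ∀ ν ∈ Finset.Icc 2 (k + 1), (ν : ℂ) / (n ^ (k + 2 - ν) * (m + n) ^ (ν + 1))
      = ((ν : ℂ) * m ^ 2 * n ^ (ν - 1) * (m + n) ^ (k + 2 - ν)) / D := by
    intro ν hν
    simp only [Finset.mem_Icc] at hν
    rw [div_eq_div_iff (mul_ne_zero (pow_ne_zero _ hn) (pow_ne_zero _ hmn)) hDne, hD,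
      show n ^ (k + 1) = n ^ (ν - 1) * n ^ (k + 2 - ν) by rw [← pow_add]; congr 1; omega,
      show (m + n) ^ (k + 3) = (m + n) ^ (k + 2 - ν) * (m + n) ^ (ν + 1) by
        rw [← pow_add]; congr 1; omega]
    ring
  have h2 : ((k : ℂ) + 1) / (m * (m + n) ^ (k + 2))
      = (((k : ℂ) + 1) * m * n ^ (k + 1) * (m + n)) / D := by
    rw [div_eq_div_iff (mul_ne_zero hm (pow_ne_zero _ hmn)) hDne, hD,
      show (m + n) ^ (k + 3) = (m + n) ^ (k + 2) * (m + n) by rw [← pow_succ]]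
    ring
  have h3 : 1 / (m ^ 2 * (m + n) ^ (k + 1)) = (n ^ (k + 1) * (m + n) ^ 2) / D := by
    rw [div_eq_div_iff (mul_ne_zero (pow_ne_zero _ hm) (pow_ne_zero _ hmn)) hDne, hD,
      show (m + n) ^ (k + 3) = (m + n) ^ (k + 1) * (m + n) ^ 2 by rw [← pow_add]]
    ring
  have h4 : 1 / (n ^ (k + 1) * m ^ 2) = (m + n) ^ (k + 3) / D := by
    rw [div_eq_div_iff (mul_ne_zero (pow_ne_zero _ hn) (pow_ne_zero _ hm)) hDne, hD]
    ring
  have h5 : 1 / (n ^ (k + 1) * (m + n) ^ 2) = (m ^ 2 * (m + n) ^ (k + 1)) / D := by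
    rw [div_eq_div_iff (mul_ne_zero (pow_ne_zero _ hn) (pow_ne_zero _ hmn)) hDne, hD,
      show (m + n) ^ (k + 3) = (m + n) ^ (k + 1) * (m + n) ^ 2 by rw [← pow_add]]
    ring
  rw [Finset.sum_congr rfl h1, ← Finset.sum_div, h2, h3, h4, h5, ← add_div,
    ← add_div, ← sub_div]
  exact congrArg (· / D) (poly_id k m n)

lemma ineq1 (k ν : ℕ) (h2 : 2 ≤ ν) (hν : ν ≤ k + 1) (m n : ℝ) (hm : 1 ≤ m) (hn : 1 ≤ n) :
    m ^ 2 * n ^ (k + 1) ≤ n ^ (k + 2 - ν) * (m + n) ^ (ν + 1) := by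
  have h3 : (m + n) ^ (ν + 1) = (m + n) ^ (ν - 2) * (m + n) ^ 3 := by
    rw [← pow_add]; congr 1; omega
  have h4 : n ^ (k + 1) = n ^ (k + 2 - ν) * (n ^ (ν - 2) * n) := by
    rw [← pow_succ, ← pow_add]; congr 1; omega
  rw [h3, h4]
  have hm0 : (0:ℝ) < m := by linarith
  have hn0 : (0:ℝ) < n := by linarith
  calc m ^ 2 * (n ^ (k + 2 - ν) * (n ^ (ν - 2) * n))
      = n ^ (k + 2 - ν) * (n ^ (ν - 2) * (m ^ 2 * n)) := by ring
    _ ≤ n ^ (k + 2 - ν) * ((m + n) ^ (ν - 2) * (m + n) ^ 3) := by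
        have hnm : n ≤ m + n := by linarith
        have hc : m ^ 2 * n ≤ (m + n) ^ 3 := by nlinarith [sq_nonneg m, sq_nonneg n]
        have h5 : n ^ (ν - 2) ≤ (m + n) ^ (ν - 2) := pow_le_pow_left₀ (le_of_lt hn0) hnm _
        have hp : (0:ℝ) ≤ n ^ (ν - 2) := by positivity
        nlinarith [pow_pos hn0 (k + 2 - ν), pow_pos (by linarith : (0:ℝ) < m + n) (ν - 2),
          mul_le_mul h5 hc (by positivity) (by positivity)]
    _ = n ^ (k + 2 - ν) * ((m + n) ^ (ν - 2) * (m + n) ^ 3) := rfl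

lemma ineq2 (k : ℕ) (m n : ℝ) (hm : 1 ≤ m) (hn : 1 ≤ n) :
    m ^ 2 * n ^ (k + 1) ≤ m * (m + n) ^ (k + 2) := by
  have h3 : (m + n) ^ (k + 2) = (m + n) ^ k * (m + n) ^ 2 := by rw [← pow_add]
  have h4 : n ^ (k + 1) = n ^ k * n := by rw [← pow_succ]
  rw [h3, h4]
  have hm0 : (0:ℝ) < m := by linarith
  have hn0 : (0:ℝ) < n := by linarith
  have h5 : n ^ k ≤ (m + n) ^ k := pow_le_pow_left₀ (le_of_lt hn0) (by linarith) _
  have hc : m * n ≤ (m + n) ^ 2 := by nlinarith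
  calc m ^ 2 * (n ^ k * n) = m * (n ^ k * (m * n)) := by ring
    _ ≤ m * ((m + n) ^ k * (m + n) ^ 2) := by
        have := mul_le_mul h5 hc (by positivity) (by positivity)
        nlinarith
    _ = m * ((m + n) ^ k * (m + n) ^ 2) := rfl

set_option maxHeartbeats 2000000 in
theorem weighted_sum_formula_double_polylog (k : ℕ) (hk : 1 ≤ k) (x : ℂ)
    (hx : ‖x‖ ≤ 1) :
    (∑ ν ∈ Finset.Icc 2 (k + 1), (ν : ℂ) * ∑' p : ℕ × ℕ, x ^ (p.2 + 1) /
        (((p.2 : ℂ) + 1) ^ (k + 2 - ν) * ((p.1 : ℂ) + 1 + ((p.2 : ℂ) + 1)) ^ (ν + 1)))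
      + ((k : ℂ) + 1) * (∑' p : ℕ × ℕ, x ^ (p.2 + 1) /
        (((p.1 : ℂ) + 1) * ((p.1 : ℂ) + 1 + ((p.2 : ℂ) + 1)) ^ (k + 2)))
      + (∑' p : ℕ × ℕ, x ^ (p.2 + 1) /
        (((p.1 : ℂ) + 1) ^ 2 * ((p.1 : ℂ) + 1 + ((p.2 : ℂ) + 1)) ^ (k + 1)))
      - (∑' p : ℕ × ℕ, x ^ (p.1 + 1 + (p.2 + 1)) /
        (((p.1 : ℂ) + 1) ^ 2 * ((p.1 : ℂ) + 1 + ((p.2 : ℂ) + 1)) ^ (k + 1)))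
      = ∑' n : ℕ, x ^ (n + 1) / ((n : ℂ) + 1) ^ (k + 3) := by
  have hxn : ‖x‖ ≤ 1 := hx
  -- cast and nonvanishing helpers
  have hnc : ∀ j : ℕ, ‖((j : ℂ) + 1)‖ = (j : ℝ) + 1 := by
    intro j
    rw [show ((j : ℂ) + 1) = ((j + 1 : ℕ) : ℂ) by push_cast; ring, Complex.norm_natCast]
    push_cast; ring
  have hnc2 : ∀ p : ℕ × ℕ, ‖((p.1 : ℂ) + 1 + ((p.2 : ℂ) + 1))‖ = ((p.1 : ℝ) + 1) + ((p.2 : ℝ) + 1) := by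
    intro p
    rw [show ((p.1 : ℂ) + 1 + ((p.2 : ℂ) + 1)) = ((p.1 + p.2 + 2 : ℕ) : ℂ) by push_cast; ring,
      Complex.norm_natCast]
    push_cast; ring
  have hM : ∀ j : ℕ, ((j : ℂ) + 1) ≠ 0 := fun j => Nat.cast_add_one_ne_zero j
  have hMN : ∀ p : ℕ × ℕ, ((p.1 : ℂ) + 1 + ((p.2 : ℂ) + 1)) ≠ 0 := fun p => by
    rw [show ((p.1 : ℂ) + 1 + ((p.2 : ℂ) + 1)) = ((p.1 + p.2 + 1 : ℕ) : ℂ) + 1 by push_cast; ring]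
    exact hM _
  have hm1 : ∀ j : ℕ, (1 : ℝ) ≤ (j : ℝ) + 1 := fun j => by
    have : (0:ℝ) ≤ (j:ℝ) := Nat.cast_nonneg j
    linarith
  -- summable real bound
  have hsum2 : Summable fun m : ℕ => 1 / ((m : ℝ) + 1) ^ 2 := by
    have := (summable_nat_add_iff 1).mpr (Real.summable_one_div_nat_pow.mpr (le_refl 2))
    exact this.congr fun m => by push_cast; ring
  have hsumk : Summable fun n : ℕ => 1 / ((n : ℝ) + 1) ^ (k + 1) := by
    have := (summable_nat_add_iff 1).mpr (Real.summable_one_div_nat_pow.mpr (by omega : 2 ≤ k + 1))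
    exact this.congr fun m => by push_cast; ring
  set bnd : ℕ × ℕ → ℝ := fun p => (1 / ((p.1 : ℝ) + 1) ^ 2) * (1 / ((p.2 : ℝ) + 1) ^ (k + 1))
    with hbnd_def
  have hbnd : Summable bnd := by
    apply summable_mul_of_summable_norm (f := fun m : ℕ => 1 / ((m : ℝ) + 1) ^ 2)
      (g := fun n : ℕ => 1 / ((n : ℝ) + 1) ^ (k + 1))
    · exact hsum2.congr fun m => (Real.norm_of_nonneg (by positivity)).symm
    · exact hsumk.congr fun n => (Real.norm_of_nonneg (by positivity)).symm
  -- generic comparison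
  have key_le : ∀ (p : ℕ × ℕ) (D : ℂ) (d : ℝ) (_ : ‖D‖ = d)
      (_ : ((p.1 : ℝ) + 1) ^ 2 * ((p.2 : ℝ) + 1) ^ (k + 1) ≤ d) (j : ℕ), ‖x ^ j / D‖ ≤ bnd p := by
    intro p D d hDd hle j
    rw [norm_div, norm_pow, hDd]
    have hd0 : (0:ℝ) < ((p.1 : ℝ) + 1) ^ 2 * ((p.2 : ℝ) + 1) ^ (k + 1) := by positivity
    calc ‖x‖ ^ j / d ≤ 1 / (((p.1 : ℝ) + 1) ^ 2 * ((p.2 : ℝ) + 1) ^ (k + 1)) :=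
        div_le_div₀ (by norm_num) (pow_le_one₀ (norm_nonneg x) hxn) hd0 hle
      _ = bnd p := (one_div_mul_one_div _ _).symm
  -- summabilities
  have hsum_t : ∀ ν ∈ Finset.Icc 2 (k + 1), Summable (fun p : ℕ × ℕ => x ^ (p.2 + 1) /
      (((p.2 : ℂ) + 1) ^ (k + 2 - ν) * ((p.1 : ℂ) + 1 + ((p.2 : ℂ) + 1)) ^ (ν + 1))) := by
    intro ν hν
    simp only [Finset.mem_Icc] at hν
    apply Summable.of_norm_bounded hbnd
    intro p
    refine key_le p _ (((p.2 : ℝ) + 1) ^ (k + 2 - ν) * (((p.1 : ℝ) + 1) + ((p.2 : ℝ) + 1)) ^ (ν + 1))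
      ?_ (ineq1 k ν hν.1 hν.2 _ _ (hm1 p.1) (hm1 p.2)) (p.2 + 1)
    rw [norm_mul, norm_pow, norm_pow, hnc p.2, hnc2 p]
  have hsum_B : Summable (fun p : ℕ × ℕ => x ^ (p.2 + 1) /
      (((p.1 : ℂ) + 1) * ((p.1 : ℂ) + 1 + ((p.2 : ℂ) + 1)) ^ (k + 2))) := by
    apply Summable.of_norm_bounded hbnd
    intro p
    refine key_le p _ ((((p.1 : ℝ) + 1)) * (((p.1 : ℝ) + 1) + ((p.2 : ℝ) + 1)) ^ (k + 2))
      ?_ (ineq2 k _ _ (hm1 p.1) (hm1 p.2)) (p.2 + 1)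
    rw [norm_mul, norm_pow, hnc p.1, hnc2 p]
  have hCineq : ∀ p : ℕ × ℕ, ((p.1 : ℝ) + 1) ^ 2 * ((p.2 : ℝ) + 1) ^ (k + 1)
      ≤ ((p.1 : ℝ) + 1) ^ 2 * (((p.1 : ℝ) + 1) + ((p.2 : ℝ) + 1)) ^ (k + 1) := by
    intro p
    have h1 : ((p.2 : ℝ) + 1) ^ (k + 1) ≤ (((p.1 : ℝ) + 1) + ((p.2 : ℝ) + 1)) ^ (k + 1) := by
      apply pow_le_pow_left₀ (by positivity)
      have := hm1 p.1; linarith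
    exact mul_le_mul_of_nonneg_left h1 (by positivity)
  have hsum_C : Summable (fun p : ℕ × ℕ => x ^ (p.2 + 1) /
      (((p.1 : ℂ) + 1) ^ 2 * ((p.1 : ℂ) + 1 + ((p.2 : ℂ) + 1)) ^ (k + 1))) := by
    apply Summable.of_norm_bounded hbnd
    intro p
    refine key_le p _ ((((p.1 : ℝ) + 1)) ^ 2 * (((p.1 : ℝ) + 1) + ((p.2 : ℝ) + 1)) ^ (k + 1))
      ?_ (hCineq p) (p.2 + 1)
    rw [norm_mul, norm_pow, norm_pow, hnc p.1, hnc2 p]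
  have hsum_D : Summable (fun p : ℕ × ℕ => x ^ (p.1 + 1 + (p.2 + 1)) /
      (((p.1 : ℂ) + 1) ^ 2 * ((p.1 : ℂ) + 1 + ((p.2 : ℂ) + 1)) ^ (k + 1))) := by
    apply Summable.of_norm_bounded hbnd
    intro p
    refine key_le p _ ((((p.1 : ℝ) + 1)) ^ 2 * (((p.1 : ℝ) + 1) + ((p.2 : ℝ) + 1)) ^ (k + 1))
      ?_ (hCineq p) (p.1 + 1 + (p.2 + 1))
    rw [norm_mul, norm_pow, norm_pow, hnc p.1, hnc2 p]
  have hsum_e1 : Summable (fun p : ℕ × ℕ => x ^ (p.2 + 1) /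
      (((p.2 : ℂ) + 1) ^ (k + 1) * ((p.1 : ℂ) + 1) ^ 2)) := by
    apply Summable.of_norm_bounded hbnd
    intro p
    refine key_le p _ ((((p.2 : ℝ) + 1)) ^ (k + 1) * (((p.1 : ℝ) + 1)) ^ 2)
      ?_ (le_of_eq (by ring)) (p.2 + 1)
    rw [norm_mul, norm_pow, norm_pow, hnc p.1, hnc p.2]
  have hsum_e2 : Summable (fun p : ℕ × ℕ => x ^ (p.2 + 1) /
      (((p.2 : ℂ) + 1) ^ (k + 1) * ((p.1 : ℂ) + 1 + ((p.2 : ℂ) + 1)) ^ 2)) := by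
    apply Summable.of_norm_bounded hbnd
    intro p
    refine key_le p _ ((((p.2 : ℝ) + 1)) ^ (k + 1) * ((((p.1 : ℝ) + 1)) + ((p.2 : ℝ) + 1)) ^ 2)
      ?_ ?_ (p.2 + 1)
    · rw [norm_mul, norm_pow, norm_pow, hnc p.2, hnc2 p]
    · have h1 : ((p.1 : ℝ) + 1) ^ 2 ≤ ((((p.1 : ℝ) + 1)) + ((p.2 : ℝ) + 1)) ^ 2 := by
        have := hm1 p.2; nlinarith [hm1 p.1]
      calc ((p.1 : ℝ) + 1) ^ 2 * ((p.2 : ℝ) + 1) ^ (k + 1)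
          = ((p.2 : ℝ) + 1) ^ (k + 1) * ((p.1 : ℝ) + 1) ^ 2 := by ring
        _ ≤ _ := mul_le_mul_of_nonneg_left h1 (by positivity)
  -- the gated function g
  set g : ℕ × ℕ → ℂ := fun p => if p.1 < p.2 then x ^ (p.2 + 1) /
      (((p.2 : ℂ) + 1) ^ (k + 1) * ((p.1 : ℂ) + 1) ^ 2) else 0 with hg_def
  have hsum_g : Summable g := by
    apply Summable.of_norm_bounded hbnd
    intro p
    by_cases hp : p.1 < p.2
    · simp only [hg_def, if_pos hp]
      refine key_le p _ ((((p.2 : ℝ) + 1)) ^ (k + 1) * (((p.1 : ℝ) + 1)) ^ 2)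
        ?_ (le_of_eq (by ring)) (p.2 + 1)
      rw [norm_mul, norm_pow, norm_pow, hnc p.1, hnc p.2]
    · simp only [hg_def, if_neg hp, norm_zero]
      positivity
  -- Step 1: push constants inside and merge the tsums
  have step1 : ∀ ν ∈ Finset.Icc 2 (k + 1), (ν : ℂ) * (∑' p : ℕ × ℕ, x ^ (p.2 + 1) /
      (((p.2 : ℂ) + 1) ^ (k + 2 - ν) * ((p.1 : ℂ) + 1 + ((p.2 : ℂ) + 1)) ^ (ν + 1)))
      = ∑' p : ℕ × ℕ, (ν : ℂ) * (x ^ (p.2 + 1) /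
      (((p.2 : ℂ) + 1) ^ (k + 2 - ν) * ((p.1 : ℂ) + 1 + ((p.2 : ℂ) + 1)) ^ (ν + 1))) :=
    fun ν _ => (tsum_mul_left).symm
  rw [Finset.sum_congr rfl step1,
    ← Summable.tsum_finsetSum (fun ν hν => ((hsum_t ν hν).mul_left _)),
    show ((k : ℂ) + 1) * (∑' p : ℕ × ℕ, x ^ (p.2 + 1) /
        (((p.1 : ℂ) + 1) * ((p.1 : ℂ) + 1 + ((p.2 : ℂ) + 1)) ^ (k + 2)))
      = ∑' p : ℕ × ℕ, ((k : ℂ) + 1) * (x ^ (p.2 + 1) /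
        (((p.1 : ℂ) + 1) * ((p.1 : ℂ) + 1 + ((p.2 : ℂ) + 1)) ^ (k + 2))) from (tsum_mul_left).symm,
    ← Summable.tsum_add (summable_sum (fun ν hν => ((hsum_t ν hν).mul_left _))) (hsum_B.mul_left _),
    ← Summable.tsum_add ((summable_sum (fun ν hν => ((hsum_t ν hν).mul_left _))).add
      (hsum_B.mul_left _)) hsum_C]
  -- pointwise algebraic identity
  have hptw : ∀ p : ℕ × ℕ,
      ((∑ ν ∈ Finset.Icc 2 (k + 1), (ν : ℂ) * (x ^ (p.2 + 1) /
          (((p.2 : ℂ) + 1) ^ (k + 2 - ν) * ((p.1 : ℂ) + 1 + ((p.2 : ℂ) + 1)) ^ (ν + 1))))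
        + ((k : ℂ) + 1) * (x ^ (p.2 + 1) /
          (((p.1 : ℂ) + 1) * ((p.1 : ℂ) + 1 + ((p.2 : ℂ) + 1)) ^ (k + 2)))
        + x ^ (p.2 + 1) / (((p.1 : ℂ) + 1) ^ 2 * ((p.1 : ℂ) + 1 + ((p.2 : ℂ) + 1)) ^ (k + 1)))
      = x ^ (p.2 + 1) / (((p.2 : ℂ) + 1) ^ (k + 1) * ((p.1 : ℂ) + 1) ^ 2)
        - x ^ (p.2 + 1) / (((p.2 : ℂ) + 1) ^ (k + 1) * ((p.1 : ℂ) + 1 + ((p.2 : ℂ) + 1)) ^ 2) := by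
    intro p
    have halg := alg_id k ((p.1 : ℂ) + 1) ((p.2 : ℂ) + 1) (hM p.1) (hM p.2) (hMN p)
    have hA : ∑ ν ∈ Finset.Icc 2 (k + 1), (ν : ℂ) * (x ^ (p.2 + 1) /
          (((p.2 : ℂ) + 1) ^ (k + 2 - ν) * ((p.1 : ℂ) + 1 + ((p.2 : ℂ) + 1)) ^ (ν + 1)))
        = x ^ (p.2 + 1) * ∑ ν ∈ Finset.Icc 2 (k + 1), (ν : ℂ) /
          (((p.2 : ℂ) + 1) ^ (k + 2 - ν) * (((p.1 : ℂ) + 1) + ((p.2 : ℂ) + 1)) ^ (ν + 1)) := by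
      rw [Finset.mul_sum]
      exact Finset.sum_congr rfl fun ν _ => by ring
    rw [hA]
    linear_combination x ^ (p.2 + 1) * halg
  rw [tsum_congr hptw]
  -- reindex the fourth tsum
  have hDg : (∑' p : ℕ × ℕ, x ^ (p.1 + 1 + (p.2 + 1)) /
      (((p.1 : ℂ) + 1) ^ 2 * ((p.1 : ℂ) + 1 + ((p.2 : ℂ) + 1)) ^ (k + 1))) = ∑' p, g p := by
    have hinj : Function.Injective (fun q : ℕ × ℕ => ((q.1, q.1 + q.2 + 1) : ℕ × ℕ)) := by
      intro a b hab
      simp only [Prod.mk.injEq] at hab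
      exact Prod.ext hab.1 (by omega)
    have hsupp : Function.support g ⊆ Set.range (fun q : ℕ × ℕ => ((q.1, q.1 + q.2 + 1) : ℕ × ℕ)) := by
      intro p hp
      simp only [Function.mem_support, hg_def] at hp
      by_cases h : p.1 < p.2
      · exact ⟨(p.1, p.2 - p.1 - 1), Prod.ext rfl (by simp; omega)⟩
      · simp [h] at hp
    rw [← hinj.tsum_eq hsupp]
    refine tsum_congr fun q => ?_
    have hq : q.1 < q.1 + q.2 + 1 := by omega
    simp only [hg_def, if_pos hq]
    have hcast : (((q.1 + q.2 + 1 : ℕ) : ℂ) + 1) = ((q.1 : ℂ) + 1) + ((q.2 : ℂ) + 1) := by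
      push_cast; ring
    have hexp : q.1 + 1 + (q.2 + 1) = q.1 + q.2 + 1 + 1 := by omega
    rw [hexp]
    push_cast
    ring
  rw [hDg, ← Summable.tsum_sub (hsum_e1.sub hsum_e2) hsum_g]
  -- iterate the double sum
  have hFsum : Summable (fun p : ℕ × ℕ =>
      (x ^ (p.2 + 1) / (((p.2 : ℂ) + 1) ^ (k + 1) * ((p.1 : ℂ) + 1) ^ 2)
        - x ^ (p.2 + 1) / (((p.2 : ℂ) + 1) ^ (k + 1) * ((p.1 : ℂ) + 1 + ((p.2 : ℂ) + 1)) ^ 2))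
        - g p) := (hsum_e1.sub hsum_e2).sub hsum_g
  have hswap : Summable ((fun p : ℕ × ℕ =>
      (x ^ (p.2 + 1) / (((p.2 : ℂ) + 1) ^ (k + 1) * ((p.1 : ℂ) + 1) ^ 2)
        - x ^ (p.2 + 1) / (((p.2 : ℂ) + 1) ^ (k + 1) * ((p.1 : ℂ) + 1 + ((p.2 : ℂ) + 1)) ^ 2))
        - g p) ∘ (Equiv.prodComm ℕ ℕ)) := (Equiv.prodComm ℕ ℕ).summable_iff.mpr hFsum
  refine Eq.trans ((Equiv.prodComm ℕ ℕ).tsum_eq _).symm ?_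
  refine Eq.trans (Summable.tsum_prod' hswap (fun n => hswap.prod_factor n)) ?_
  refine tsum_congr fun n => ?_
  -- the inner sum over m
  have hw : Summable (fun j : ℕ => 1 / ((j : ℂ) + 1) ^ 2) := by
    apply Summable.of_norm
    refine hsum2.congr fun j => ?_
    rw [norm_div, norm_one, norm_pow, hnc j]
  have hw2 : Summable (fun m : ℕ => 1 / ((m + (n + 1) : ℕ) + 1 : ℂ) ^ 2) :=
    (summable_nat_add_iff (n + 1)).mpr hw
  have hgrow : Summable (fun m : ℕ => g (m, n)) := by
    apply summable_of_ne_finset_zero (s := Finset.range n)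
    intro m hm
    simp only [Finset.mem_range, not_lt] at hm
    simp only [hg_def, if_neg (by omega : ¬ (m, n).1 < (m, n).2)]
  simp only [Equiv.prodComm_apply, Function.comp_apply, Prod.swap_prod_mk]
  have hrow : ∀ m : ℕ,
      ((x ^ (n + 1) / (((n : ℂ) + 1) ^ (k + 1) * ((m : ℂ) + 1) ^ 2)
        - x ^ (n + 1) / (((n : ℂ) + 1) ^ (k + 1) * ((m : ℂ) + 1 + ((n : ℂ) + 1)) ^ 2))
        - g (m, n))
      = ((x ^ (n + 1) / ((n : ℂ) + 1) ^ (k + 1)) * (1 / ((m : ℂ) + 1) ^ 2)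
          - (x ^ (n + 1) / ((n : ℂ) + 1) ^ (k + 1)) * (1 / ((m + (n + 1) : ℕ) + 1 : ℂ) ^ 2))
        - g (m, n) := by
    intro m
    have hcast : (((m + (n + 1) : ℕ) : ℂ) + 1) = ((m : ℂ) + 1) + ((n : ℂ) + 1) := by
      push_cast; ring
    rw [hcast, mul_one_div, mul_one_div, div_div, div_div]
  rw [tsum_congr hrow, Summable.tsum_sub ((hw.mul_left _).sub (hw2.mul_left _)) hgrow,
    Summable.tsum_sub (hw.mul_left _) (hw2.mul_left _), tsum_mul_left, tsum_mul_left,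
    ← mul_sub, ← Summable.sum_add_tsum_nat_add (n + 1) hw]
  have hgsum : ∑' m : ℕ, g (m, n)
      = (x ^ (n + 1) / ((n : ℂ) + 1) ^ (k + 1)) * ∑ i ∈ Finset.range n, 1 / ((i : ℂ) + 1) ^ 2 := by
    rw [tsum_eq_sum (s := Finset.range n) (fun m hm => by
      simp only [Finset.mem_range, not_lt] at hm
      simp only [hg_def, if_neg (by omega : ¬ (m, n).1 < (m, n).2)]), Finset.mul_sum]
    refine Finset.sum_congr rfl fun m hm => ?_
    simp only [Finset.mem_range] at hm
    simp only [hg_def, if_pos (show (m, n).1 < (m, n).2 from hm)]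
    rw [mul_one_div, div_div]
  rw [hgsum]
  rw [show (∑ i ∈ Finset.range (n + 1), 1 / ((i : ℂ) + 1) ^ 2 + ∑' m : ℕ, 1 / (((m + (n + 1) : ℕ) : ℂ) + 1) ^ 2)
      - ∑' m : ℕ, 1 / (((m + (n + 1) : ℕ) : ℂ) + 1) ^ 2 = ∑ i ∈ Finset.range (n + 1), 1 / ((i : ℂ) + 1) ^ 2
      from by ring, Finset.sum_range_succ,
    show ((n : ℂ) + 1) ^ (k + 3) = ((n : ℂ) + 1) ^ (k + 1) * ((n : ℂ) + 1) ^ 2 by ring,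
    mul_add, add_sub_cancel_left, mul_one_div, div_div]
end

section
/- For every positive integer k, ∑_{ν=2}^{k} ν · ζ₂(k+2−ν, ν+1) + 2(k+1) ζ₂(1, k+2) = ζ(k+3). -/
open scoped BigOperators

namespace WSF

/-- The real term `1/((m+1)^a (n+1)^b (m+n+2)^c)`. -/
noncomputable def t (a b c : ℕ) (p : ℕ × ℕ) : ℝ :=
  1 / (((p.1 : ℝ) + 1) ^ a * ((p.2 : ℝ) + 1) ^ b * (((p.1 : ℝ) + 1) + ((p.2 : ℝ) + 1)) ^ c)

noncomputable def T (a b c : ℕ) : ℝ := ∑' p : ℕ × ℕ, t a b c p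

lemma t_nonneg (a b c : ℕ) (p : ℕ × ℕ) : 0 ≤ t a b c p := by
  unfold t; positivity

lemma summable_aux (s : ℕ) (hs : 2 ≤ s) :
    Summable (fun n : ℕ => 1 / ((n : ℝ) + 1) ^ s) := by
  have h0 : Summable (fun n : ℕ => 1 / (n : ℝ) ^ s) :=
    (Real.summable_one_div_nat_pow).2 (by omega)
  have h := (summable_nat_add_iff 1).2 h0
  refine h.congr fun n => ?_
  push_cast
  ring

lemma summable_t {a b c : ℕ} (i j : ℕ) (ha : 2 ≤ a + i) (hb : 2 ≤ b + j)
    (hc : i + j ≤ c) : Summable (t a b c) := by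
  have hmaj : Summable (fun p : ℕ × ℕ =>
      (1 / ((p.1 : ℝ) + 1) ^ (a + i)) * (1 / ((p.2 : ℝ) + 1) ^ (b + j))) :=
by
    apply Summable.mul_of_nonneg (summable_aux _ ha) (summable_aux _ hb)
    · intro n
      positivity
    · intro n
      positivity
  refine Summable.of_nonneg_of_le (t_nonneg a b c) (fun p => ?_) hmaj
  set x : ℝ := (p.1 : ℝ) + 1 with hxdef
  set y : ℝ := (p.2 : ℝ) + 1 with hydef
  have hx : (1 : ℝ) ≤ x := by simp [hxdef]
  have hy : (1 : ℝ) ≤ y := by simp [hydef]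
  have hxz : x ≤ x + y := by linarith
  have hyz : y ≤ x + y := by linarith
  have hz : (1 : ℝ) ≤ x + y := by linarith
  unfold t
  rw [div_mul_div_comm, one_mul]
  apply one_div_le_one_div_of_le
  · positivity
  · calc x ^ (a + i) * y ^ (b + j)
        = (x ^ a * y ^ b) * (x ^ i * y ^ j) := by rw [pow_add, pow_add]; ring
      _ ≤ (x ^ a * y ^ b) * ((x + y) ^ i * (x + y) ^ j) := by
          gcongr <;> linarith
      _ = (x ^ a * y ^ b) * (x + y) ^ (i + j) := by rw [pow_add]
      _ ≤ (x ^ a * y ^ b) * (x + y) ^ c := by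
          gcongr

lemma zeta2_eq (a b : ℕ) : zeta2 a b = ((T a 0 b : ℝ) : ℂ) := by
  rw [zeta2, T, Complex.ofReal_tsum]
  refine tsum_congr fun p => ?_
  unfold t
  push_cast
  rw [pow_zero]
  ring

lemma T_symm (a b c : ℕ) : T a b c = T b a c := by
  rw [T, T, ← (Equiv.prodComm ℕ ℕ).tsum_eq (t a b c)]
  refine tsum_congr fun p => ?_
  unfold t
  simp only [Equiv.prodComm_apply, Prod.fst_swap, Prod.snd_swap]
  ring_nf

/-- Key pointwise identity: `1/(x^{a+1} z^{b+1}) = 1/(x^{a+1} y z^b) - 1/(x^a y z^{b+1})`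
where `z = x + y`. -/
lemma key1 (x y : ℝ) (hx : 0 < x) (hy : 0 < y) (a b : ℕ) :
    1 / (x ^ (a + 1) * 1 * (x + y) ^ (b + 1)) =
      1 / (x ^ (a + 1) * y * (x + y) ^ b) - 1 / (x ^ a * y * (x + y) ^ (b + 1)) := by
  have hz : (0:ℝ) < x + y := by linarith
  rw [pow_succ x a, pow_succ (x + y) b]
  field_simp
  ring

lemma T_split (a b : ℕ) (hb : 2 ≤ b) :
    T (a + 1) 0 (b + 1) = T (a + 1) 1 b - T a 1 (b + 1) := by
  have h1 : Summable (t (a + 1) 1 b) := summable_t 1 1 (by omega) (by omega) (by omega)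
  have h2 : Summable (t a 1 (b + 1)) := summable_t 2 1 (by omega) (by omega) (by omega)
  rw [T, T, T, ← Summable.tsum_sub h1 h2]
  refine tsum_congr fun p => ?_
  unfold t
  have hx : (0:ℝ) < (p.1 : ℝ) + 1 := by positivity
  have hy : (0:ℝ) < (p.2 : ℝ) + 1 := by positivity
  simpa [pow_zero, pow_one] using key1 _ _ hx hy a b

lemma two_T (k : ℕ) (hk : 1 ≤ k) : 2 * T 1 0 (k + 2) = T 1 1 (k + 1) := by
  have h := T_split 0 (k + 1) (by omega)
  rw [T_symm 0 1 (k + 2)] at h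
  norm_num at h
  linarith

/-- Abel summation for our weighted telescoping sum. -/
lemma abel_sum (g : ℕ → ℝ) (k : ℕ) (hk : 1 ≤ k) :
    ∑ ν ∈ Finset.Icc 2 k, (ν : ℝ) * (g ν - g (ν + 1)) =
      (∑ ν ∈ Finset.Icc 2 k, g ν) + g 2 - (k : ℝ) * g (k + 1) := by
  induction k with
  | zero => omega
  | succ n ih =>
    rcases Nat.lt_or_ge n 1 with hn | hn
    · interval_cases n
      simp
    · rw [Finset.sum_Icc_succ_top (by omega), Finset.sum_Icc_succ_top (by omega), ih hn]
      push_cast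
      ring

/-- Second key pointwise identity:
`1/(x y z^{c+1}) = 1/(x y² z^c) - 1/(y² z^{c+1})` where `z = x + y`. -/
lemma key2 (x y : ℝ) (hx : 0 < x) (hy : 0 < y) (c : ℕ) :
    1 / (x * y * (x + y) ^ (c + 1)) =
      1 / (x * y ^ 2 * (x + y) ^ c) - 1 / (y ^ 2 * (x + y) ^ (c + 1)) := by
  have hz : (0:ℝ) < x + y := by linarith
  rw [pow_succ (x + y) c]
  field_simp
  ring

/-- Geometric/telescoping identity, pointwise. -/
lemma geom (x y : ℝ) (hx : 0 < x) (hy : 0 < y) (k : ℕ) (hk : 1 ≤ k) :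
    ∑ ν ∈ Finset.Icc 2 (k + 1), 1 / (x ^ (k + 2 - ν) * y * (x + y) ^ ν) =
      1 / (x ^ k * y ^ 2 * (x + y)) - 1 / (y ^ 2 * (x + y) ^ (k + 1)) := by
  have hz : (0:ℝ) < x + y := by linarith
  induction k with
  | zero => omega
  | succ n ih =>
    rcases Nat.lt_or_ge n 1 with hn | hn
    · interval_cases n
      have h2 : (0:ℕ) + 1 + 1 = 2 := rfl
      rw [h2, Finset.Icc_self, Finset.sum_singleton]
      norm_num
      field_simp
      ring
    · rw [Finset.sum_Icc_succ_top (by omega)]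
      have hstep : ∀ ν ∈ Finset.Icc 2 (n + 1),
          1 / (x ^ (n + 1 + 2 - ν) * y * (x + y) ^ ν) =
            (1 / x) * (1 / (x ^ (n + 2 - ν) * y * (x + y) ^ ν)) := by
        intro ν hν
        obtain ⟨h2, hn1⟩ := Finset.mem_Icc.mp hν
        have he : n + 1 + 2 - ν = (n + 2 - ν) + 1 := by omega
        rw [he, pow_succ]
        field_simp
      rw [Finset.sum_congr rfl hstep, ← Finset.mul_sum, ih hn]
      have htop : n + 1 + 2 - (n + 1 + 1) = 1 := by omega
      rw [htop]
      have hk2 := key2 x y hx hy (n + 1)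
      rw [pow_one]
      rw [hk2]
      have e1 : (1 / x) * (1 / (x ^ n * y ^ 2 * (x + y))) =
          1 / (x ^ (n + 1) * y ^ 2 * (x + y)) := by
        rw [pow_succ]
        field_simp
        ring
      have e2 : (1 / x) * (1 / (y ^ 2 * (x + y) ^ (n + 1))) =
          1 / (x * y ^ 2 * (x + y) ^ (n + 1)) := by
        field_simp
      rw [mul_sub, e1, e2]
      ring

lemma sum_W (k : ℕ) (hk : 1 ≤ k) :
    ∑ ν ∈ Finset.Icc 2 (k + 1), T (k + 2 - ν) 1 ν = T k 2 1 - T 0 2 (k + 1) := by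
  have hsum : ∀ ν ∈ Finset.Icc 2 (k + 1), Summable (t (k + 2 - ν) 1 ν) := by
    intro ν hν
    obtain ⟨h2, h1⟩ := Finset.mem_Icc.mp hν
    exact summable_t 1 1 (by omega) (by omega) (by omega)
  have h1 : Summable (t k 2 1) := summable_t 1 0 (by omega) (by omega) (by omega)
  have h2 : Summable (t 0 2 (k + 1)) := summable_t 2 0 (by omega) (by omega) (by omega)
  unfold T
  rw [← Summable.tsum_finsetSum hsum, ← Summable.tsum_sub h1 h2]
  refine tsum_congr fun p => ?_
  have hx : (0:ℝ) < (p.1 : ℝ) + 1 := by positivity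
  have hy : (0:ℝ) < (p.2 : ℝ) + 1 := by positivity
  have hgeom := geom ((p.1 : ℝ) + 1) ((p.2 : ℝ) + 1) hx hy k hk
  unfold t
  simpa [pow_one] using hgeom

lemma lemB (k : ℕ) (hk : 1 ≤ k) :
    T k 2 1 + T k 1 2 = T (k + 1) 2 0 - T (k + 1) 0 2 := by
  have h1 : Summable (t k 2 1) := summable_t 1 0 (by omega) (by omega) (by omega)
  have h2 : Summable (t k 1 2) := summable_t 1 1 (by omega) (by omega) (by omega)
  have h3 : Summable (t (k + 1) 2 0) := summable_t 0 0 (by omega) (by omega) (by omega)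
  have h4 : Summable (t (k + 1) 0 2) := summable_t 0 2 (by omega) (by omega) (by omega)
  unfold T
  rw [← Summable.tsum_add h1 h2, ← Summable.tsum_sub h3 h4]
  refine tsum_congr fun p => ?_
  unfold t
  have hx : (0:ℝ) < (p.1 : ℝ) + 1 := by positivity
  have hy : (0:ℝ) < (p.2 : ℝ) + 1 := by positivity
  have hz : (0:ℝ) < ((p.1 : ℝ) + 1) + ((p.2 : ℝ) + 1) := by positivity
  rw [pow_succ ((p.1 : ℝ) + 1) k]
  field_simp
  ring

lemma stuffle (k : ℕ) (hk : 1 ≤ k) :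
    T (k + 1) 2 0 = T (k + 1) 0 2 + T 0 2 (k + 1)
      + ∑' n : ℕ, 1 / ((n : ℝ) + 1) ^ (k + 3) := by
  classical
  set g : ℕ × ℕ → ℝ := fun p => 1 / (((p.1 : ℝ) + 1) ^ (k + 1) * ((p.2 : ℝ) + 1) ^ 2)
    with hg
  have hgnn : ∀ p, 0 ≤ g p := fun p => by rw [hg]; positivity
  have hT20 : T (k + 1) 2 0 = ∑' p, g p := by
    unfold T
    refine tsum_congr fun p => ?_
    unfold t
    rw [hg]
    norm_num
  have hgsum : Summable g := by
    have h := summable_t (a := k + 1) (b := 2) (c := 0) 0 0 (by omega) (by omega) le_rfl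
    refine h.congr fun p => ?_
    unfold t
    rw [hg]
    norm_num
  set g1 : ℕ × ℕ → ℝ := fun p => if p.1 < p.2 then g p else 0 with hg1
  set g2 : ℕ × ℕ → ℝ := fun p => if p.1 = p.2 then g p else 0 with hg2
  set g3 : ℕ × ℕ → ℝ := fun p => if p.2 < p.1 then g p else 0 with hg3
  have hs1 : Summable g1 := by
    refine Summable.of_nonneg_of_le (fun p => ?_) (fun p => ?_) hgsum <;>
      · rw [hg1]
        dsimp only
        split
        · first | exact hgnn _ | exact le_rfl
        · first | exact le_rfl | exact hgnn _
  have hs2 : Summable g2 := by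
    refine Summable.of_nonneg_of_le (fun p => ?_) (fun p => ?_) hgsum <;>
      · rw [hg2]
        dsimp only
        split
        · first | exact hgnn _ | exact le_rfl
        · first | exact le_rfl | exact hgnn _
  have hs3 : Summable g3 := by
    refine Summable.of_nonneg_of_le (fun p => ?_) (fun p => ?_) hgsum <;>
      · rw [hg3]
        dsimp only
        split
        · first | exact hgnn _ | exact le_rfl
        · first | exact le_rfl | exact hgnn _
  have hsplit : ∑' p, g p = (∑' p, g1 p) + (∑' p, g2 p) + (∑' p, g3 p) := by
    rw [← Summable.tsum_add hs1 hs2, ← Summable.tsum_add (hs1.add hs2) hs3]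
    refine tsum_congr fun p => ?_
    rcases lt_trichotomy p.1 p.2 with h | h | h
    · simp [hg1, hg2, hg3, h, h.ne, (lt_asymm h)]
    · simp [hg1, hg2, hg3, h, lt_irrefl]
    · simp [hg1, hg2, hg3, h, h.ne', (lt_asymm h)]
  have e1 : ∑' p, g1 p = T (k + 1) 0 2 := by
    have hinj : Function.Injective (fun q : ℕ × ℕ => ((q.1, q.1 + q.2 + 1) : ℕ × ℕ)) := by
      intro a b h
      simp only [Prod.mk.injEq] at h
      exact Prod.ext h.1 (by omega)
    have hsupp : Function.support g1 ⊆
        Set.range (fun q : ℕ × ℕ => ((q.1, q.1 + q.2 + 1) : ℕ × ℕ)) := by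
      intro p hp
      have hlt : p.1 < p.2 := by
        by_contra h
        apply hp
        simp [hg1, h]
      obtain ⟨p1, p2⟩ := p
      refine ⟨(p1, p2 - p1 - 1), ?_⟩
      simp only [Prod.mk.injEq]
      exact ⟨trivial, by omega⟩
    rw [← hinj.tsum_eq hsupp]
    unfold T
    refine tsum_congr fun q => ?_
    have hlt : q.1 < q.1 + q.2 + 1 := by omega
    simp only [hg1, hg, if_pos hlt]
    unfold t
    rw [pow_zero]
    push_cast
    ring_nf
  have e2 : ∑' p, g2 p = ∑' n : ℕ, 1 / ((n : ℝ) + 1) ^ (k + 3) := by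
    have hinj : Function.Injective (fun d : ℕ => ((d, d) : ℕ × ℕ)) := by
      intro a b h
      simp only [Prod.mk.injEq] at h
      exact h.1
    have hsupp : Function.support g2 ⊆ Set.range (fun d : ℕ => ((d, d) : ℕ × ℕ)) := by
      intro p hp
      have heq : p.1 = p.2 := by
        by_contra h
        apply hp
        simp [hg2, h]
      exact ⟨p.1, by simp [Prod.ext_iff, heq]⟩
    rw [← hinj.tsum_eq hsupp]
    refine tsum_congr fun d => ?_
    simp only [hg2, hg, if_pos rfl]
    rw [← pow_add]
  have e3 : ∑' p, g3 p = T 0 2 (k + 1) := by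
    have hinj : Function.Injective (fun q : ℕ × ℕ => ((q.1 + q.2 + 1, q.2) : ℕ × ℕ)) := by
      intro a b h
      simp only [Prod.mk.injEq] at h
      exact Prod.ext (by omega) h.2
    have hsupp : Function.support g3 ⊆
        Set.range (fun q : ℕ × ℕ => ((q.1 + q.2 + 1, q.2) : ℕ × ℕ)) := by
      intro p hp
      have hlt : p.2 < p.1 := by
        by_contra h
        apply hp
        simp [hg3, h]
      obtain ⟨p1, p2⟩ := p
      refine ⟨(p1 - p2 - 1, p2), ?_⟩
      simp only [Prod.mk.injEq]
      exact ⟨by omega, trivial⟩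
    rw [← hinj.tsum_eq hsupp]
    unfold T
    refine tsum_congr fun q => ?_
    have hlt : q.2 < q.1 + q.2 + 1 := by omega
    simp only [hg3, hg, if_pos hlt]
    unfold t
    rw [pow_zero]
    push_cast
    ring_nf
  rw [hT20, hsplit, e1, e2, e3]
  ring

lemma main_real (k : ℕ) (hk : 1 ≤ k) :
    (∑ ν ∈ Finset.Icc 2 k, (ν : ℝ) * T (k + 2 - ν) 0 (ν + 1))
      + 2 * ((k : ℝ) + 1) * T 1 0 (k + 2)
      = ∑' n : ℕ, 1 / ((n : ℝ) + 1) ^ (k + 3) := by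
  set g : ℕ → ℝ := fun ν => T (k + 2 - ν) 1 ν with hgdef
  have hterm : ∀ ν ∈ Finset.Icc 2 k,
      (ν : ℝ) * T (k + 2 - ν) 0 (ν + 1) = (ν : ℝ) * (g ν - g (ν + 1)) := by
    intro ν hν
    obtain ⟨h2, hk'⟩ := Finset.mem_Icc.mp hν
    have ha : k + 2 - ν = (k + 1 - ν) + 1 := by omega
    have hb : k + 2 - (ν + 1) = k + 1 - ν := by omega
    rw [hgdef]
    dsimp only
    rw [ha, hb, T_split (k + 1 - ν) ν h2]
  rw [Finset.sum_congr rfl hterm, abel_sum g k hk]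
  have hgk1 : g (k + 1) = T 1 1 (k + 1) := by
    have he : k + 2 - (k + 1) = 1 := by omega
    rw [hgdef]
    dsimp only
    rw [he]
  have hg2 : g 2 = T k 1 2 := by
    have he : k + 2 - 2 = k := by omega
    rw [hgdef]
    dsimp only
    rw [he]
  have hsum : ∑ ν ∈ Finset.Icc 2 (k + 1), g ν = T k 2 1 - T 0 2 (k + 1) := by
    rw [hgdef]
    exact sum_W k hk
  have htop : ∑ ν ∈ Finset.Icc 2 (k + 1), g ν
      = (∑ ν ∈ Finset.Icc 2 k, g ν) + g (k + 1) :=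
    Finset.sum_Icc_succ_top (by omega) g
  have h2T' : 2 * ((k : ℝ) + 1) * T 1 0 (k + 2) = ((k : ℝ) + 1) * g (k + 1) := by
    rw [hgk1, ← two_T k hk]
    ring
  rw [h2T']
  have hrw : (∑ ν ∈ Finset.Icc 2 k, g ν) + g 2 - (k : ℝ) * g (k + 1)
      + ((k : ℝ) + 1) * g (k + 1)
      = ((∑ ν ∈ Finset.Icc 2 k, g ν) + g (k + 1)) + g 2 := by ring
  rw [hrw, ← htop, hsum, hg2]
  have hB := lemB k hk
  have hSt := stuffle k hk
  linarith

end WSF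

theorem weighted_sum_formula_SF_nu (k : ℕ) (hk : 1 ≤ k) :
    (∑ ν ∈ Finset.Icc 2 k, (ν : ℂ) * zeta2 (k + 2 - ν) (ν + 1))
      + 2 * ((k : ℂ) + 1) * zeta2 1 (k + 2) = riemannZeta (k + 3) := by
  have hmain := WSF.main_real k hk
  have hz : riemannZeta ((k : ℂ) + 3)
      = ∑' n : ℕ, ((1 / ((n : ℝ) + 1) ^ (k + 3) : ℝ) : ℂ) := by
    have hs : (1 : ℝ) < ((k : ℂ) + 3).re := by
      simp only [Complex.add_re, Complex.natCast_re, Complex.ofReal_re]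
      have := Nat.cast_nonneg (α := ℝ) k
      norm_num
      linarith
    rw [zeta_eq_tsum_one_div_nat_add_one_cpow hs]
    refine tsum_congr fun n => ?_
    have hcast : ((k : ℂ) + 3) = ((k + 3 : ℕ) : ℂ) := by push_cast; ring
    rw [hcast, Complex.cpow_natCast]
    push_cast
    ring
  simp only [WSF.zeta2_eq]
  rw [show (2 * ((k : ℂ) + 1) * ((WSF.T 1 0 (k + 2) : ℝ) : ℂ))
      = (((2 * ((k : ℝ) + 1) * WSF.T 1 0 (k + 2)) : ℝ) : ℂ) by push_cast; ring]
  rw [show (∑ ν ∈ Finset.Icc 2 k, (ν : ℂ) * ((WSF.T (k + 2 - ν) 0 (ν + 1) : ℝ) : ℂ))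
      = (((∑ ν ∈ Finset.Icc 2 k, (ν : ℝ) * WSF.T (k + 2 - ν) 0 (ν + 1)) : ℝ) : ℂ) by
    push_cast
    rfl]
  rw [← Complex.ofReal_add, hmain, hz, Complex.ofReal_tsum]
end

section
/- For every positive integer k and complex x with |x| ≤ 1: ∑_{ν=2}^{k+1} (k+2−ν) ∑_{m,n≥1} x^n/(n^{k+3−ν}(m+n)^ν) − ∑_{m,n≥1} x^n/(m²(m+n)^{k+1}) − (k+1) ∑_{m,n≥1} x^{m+n}/(m(m+n)^{k+2}) = (k+1) ∑_{n≥1} x^n/n^{k+3} − ζ(2) ∑_{n≥1} x^n/n^{k+1}. -/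
open scoped BigOperators

set_option maxHeartbeats 1600000

open Filter Topology

namespace Prop31Aux



lemma keyG (u v w : ℂ) (h : u * v = w * (u - v)) (k : ℕ) :
    ∑ ν ∈ Finset.Icc 2 (k + 1), u ^ (k + 2 - ν) * v ^ ν
      = w * u ^ k * v - w * v ^ (k + 1) := by
  induction k with
  | zero => simp
  | succ k ih =>
    have hins : Finset.Icc 2 (k + 2) = insert (k + 2) (Finset.Icc 2 (k + 1)) := by
      ext a; simp only [Finset.mem_Icc, Finset.mem_insert]; omega
    rw [hins, Finset.sum_insert (by simp)]
    have hsum : ∑ ν ∈ Finset.Icc 2 (k + 1), u ^ (k + 1 + 2 - ν) * v ^ ν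
        = u * ∑ ν ∈ Finset.Icc 2 (k + 1), u ^ (k + 2 - ν) * v ^ ν := by
      rw [Finset.mul_sum]
      refine Finset.sum_congr rfl fun ν hν => ?_
      simp only [Finset.mem_Icc] at hν
      rw [show k + 1 + 2 - ν = (k + 2 - ν) + 1 by omega, pow_succ]
      ring
    rw [hsum, ih]
    simp only [show k + 1 + 2 - (k + 2) = 1 by omega, show k + 1 + 3 - (k + 2) = 2 by omega]
    linear_combination (v ^ (k + 1)) * h

lemma keyA (u v w : ℂ) (h : u * v = w * (u - v)) (k : ℕ) :
    ∑ ν ∈ Finset.Icc 2 (k + 1), ((k + 2 - ν : ℕ) : ℂ) * (u ^ (k + 3 - ν) * v ^ ν)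
      = ((k : ℂ) + 1) * w * u ^ (k + 2) - w ^ 2 * u ^ (k + 1) + w ^ 2 * v ^ (k + 1)
        - ((k : ℂ) + 1) * u ^ (k + 2) * v := by
  induction k with
  | zero => simp; linear_combination (u - w) * h
  | succ k ih =>
    have hins : Finset.Icc 2 (k + 2) = insert (k + 2) (Finset.Icc 2 (k + 1)) := by
      ext a; simp only [Finset.mem_Icc, Finset.mem_insert]; omega
    rw [hins, Finset.sum_insert (by simp)]
    have hsum : ∑ ν ∈ Finset.Icc 2 (k + 1), ((k + 1 + 2 - ν : ℕ) : ℂ) * (u ^ (k + 1 + 3 - ν) * v ^ ν)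
        = u * (∑ ν ∈ Finset.Icc 2 (k + 1), ((k + 2 - ν : ℕ) : ℂ) * (u ^ (k + 3 - ν) * v ^ ν))
          + u ^ 2 * ∑ ν ∈ Finset.Icc 2 (k + 1), u ^ (k + 2 - ν) * v ^ ν := by
      rw [Finset.mul_sum, Finset.mul_sum, ← Finset.sum_add_distrib]
      refine Finset.sum_congr rfl fun ν hν => ?_
      simp only [Finset.mem_Icc] at hν
      rw [show (k + 1 + 2 - ν : ℕ) = (k + 2 - ν) + 1 by omega,
        show k + 1 + 3 - ν = (k + 3 - ν) + 1 by omega,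
        show k + 3 - ν = (k + 2 - ν) + 1 by omega]
      push_cast
      ring
    rw [hsum, ih, keyG u v w h k]
    simp only [show k + 1 + 2 - (k + 2) = 1 by omega, show k + 1 + 3 - (k + 2) = 2 by omega]
    push_cast
    linear_combination (u ^ (k + 2) + (u - w) * v ^ (k + 1)) * h


lemma ptwise (k : ℕ) (m n : ℂ) (hm : m ≠ 0) (hn : n ≠ 0) (hmn : m + n ≠ 0) :
    ∑ ν ∈ Finset.Icc 2 (k + 1), ((k + 2 - ν : ℕ) : ℂ) / (n ^ (k + 3 - ν) * (m + n) ^ ν)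
      - 1 / (m ^ 2 * (m + n) ^ (k + 1)) + 1 / (m ^ 2 * n ^ (k + 1))
      = ((k : ℂ) + 1) * (1 / m - 1 / (m + n)) / n ^ (k + 2) := by
  have h : n⁻¹ * (m + n)⁻¹ = m⁻¹ * (n⁻¹ - (m + n)⁻¹) := by field_simp; ring
  have hA := keyA n⁻¹ (m + n)⁻¹ m⁻¹ h k
  have hconv : ∑ ν ∈ Finset.Icc 2 (k + 1), ((k + 2 - ν : ℕ) : ℂ) / (n ^ (k + 3 - ν) * (m + n) ^ ν)
      = ∑ ν ∈ Finset.Icc 2 (k + 1), ((k + 2 - ν : ℕ) : ℂ) * ((n⁻¹) ^ (k + 3 - ν) * ((m + n)⁻¹) ^ ν) := by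
    refine Finset.sum_congr rfl fun ν _ => ?_
    rw [inv_pow, inv_pow, div_eq_mul_inv, mul_inv]
  rw [hconv, hA]
  simp only [one_div, div_eq_mul_inv, mul_inv, inv_pow]
  ring


lemma s1 : Summable (fun n : ℕ => 1 / ((n : ℝ) + 1) ^ 2) := by
  have h := (Real.summable_one_div_nat_pow (p := 2)).2 (by norm_num)
  have h2 := (summable_nat_add_iff (f := fun n : ℕ => 1 / (n : ℝ) ^ 2) 1).2 h
  refine h2.congr fun n => ?_
  push_cast; ring

lemma master : Summable (fun p : ℕ × ℕ => 1 / ((p.1 : ℝ) + 1) ^ 2 * (1 / ((p.2 : ℝ) + 1) ^ 2)) := by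
  have h := Summable.mul_of_nonneg (f := fun n : ℕ => 1 / ((n : ℝ) + 1) ^ 2)
    (g := fun n : ℕ => 1 / ((n : ℝ) + 1) ^ 2) s1 s1 (fun _ => by positivity) (fun _ => by positivity)
  exact h

lemma sumP {f : ℕ × ℕ → ℂ}
    (hb : ∀ p : ℕ × ℕ, ‖f p‖ ≤ 1 / ((p.1 : ℝ) + 1) ^ 2 * (1 / ((p.2 : ℝ) + 1) ^ 2)) :
    Summable f :=
  Summable.of_norm_bounded master hb

lemma norm1 (n : ℕ) : ‖((n : ℂ) + 1)‖ = (n : ℝ) + 1 := by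
  rw [show ((n : ℂ) + 1) = ((n + 1 : ℕ) : ℂ) by push_cast; ring, Complex.norm_natCast]
  push_cast; ring

lemma norm2 (m n : ℕ) : ‖((m : ℂ) + 1 + ((n : ℂ) + 1))‖ = (m : ℝ) + (n : ℝ) + 2 := by
  rw [show ((m : ℂ) + 1 + ((n : ℂ) + 1)) = ((m + n + 2 : ℕ) : ℂ) by push_cast; ring,
    Complex.norm_natCast]
  push_cast; ring

lemma Sab (x : ℂ) (hx : ‖x‖ ≤ 1) {a b : ℕ} (ha : 2 ≤ a) (hb : 2 ≤ b) :
    Summable (fun p : ℕ × ℕ => x ^ (p.2 + 1) /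
      (((p.2 : ℂ) + 1) ^ a * ((p.1 : ℂ) + 1 + ((p.2 : ℂ) + 1)) ^ b)) := by
  apply sumP
  intro p
  rw [norm_div, norm_mul, norm_pow, norm_pow, norm_pow, norm1, norm2]
  rw [one_div_mul_one_div]
  apply div_le_div₀ (by norm_num) (pow_le_one₀ (norm_nonneg x) hx) (by positivity)
  calc ((p.1 : ℝ) + 1) ^ 2 * ((p.2 : ℝ) + 1) ^ 2
      ≤ ((p.1 : ℝ) + (p.2 : ℝ) + 2) ^ b * ((p.2 : ℝ) + 1) ^ a := by
        apply mul_le_mul _ _ (by positivity) (by positivity)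
        · calc ((p.1 : ℝ) + 1) ^ 2 ≤ ((p.1 : ℝ) + (p.2 : ℝ) + 2) ^ 2 := by
                apply pow_le_pow_left₀ (by positivity); push_cast; linarith
            _ ≤ ((p.1 : ℝ) + (p.2 : ℝ) + 2) ^ b := by
                apply pow_le_pow_right₀ ?_ hb
                have h1 : (0:ℝ) ≤ (p.1:ℝ) := Nat.cast_nonneg _
                have h2 : (0:ℝ) ≤ (p.2:ℝ) := Nat.cast_nonneg _
                linarith
        · apply pow_le_pow_right₀ ?_ ha
          have h2 : (0:ℝ) ≤ (p.2:ℝ) := Nat.cast_nonneg _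
          linarith
    _ = ((p.2 : ℝ) + 1) ^ a * ((p.1 : ℝ) + (p.2 : ℝ) + 2) ^ b := by ring



lemma cast_ne' (j : ℕ) : ((j : ℂ) + 1) ≠ 0 := by
  have h : ((j + 1 : ℕ) : ℂ) ≠ 0 := Nat.cast_ne_zero.2 (Nat.succ_ne_zero j)
  push_cast at h
  exact h

-- the inner telescoping series, for fixed shift c : ℕ
lemma tele_one (c : ℕ) :
    HasSum (fun m : ℕ => 1 / ((m : ℂ) + (c : ℂ) + 1) - 1 / ((m : ℂ) + (c : ℂ) + 2))
      (1 / ((c : ℂ) + 1)) := by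
  have hval : ∀ m : ℕ, 1 / ((m : ℂ) + (c : ℂ) + 1) - 1 / ((m : ℂ) + (c : ℂ) + 2)
      = 1 / (((m : ℂ) + (c : ℂ) + 1) * ((m : ℂ) + (c : ℂ) + 2)) := by
    intro m
    have h1 : ((m : ℂ) + (c : ℂ) + 1) ≠ 0 := by
      intro hh; apply cast_ne' (m + c); push_cast; linear_combination hh
    have h2 : ((m : ℂ) + (c : ℂ) + 2) ≠ 0 := by
      intro hh; apply cast_ne' (m + c + 1); push_cast; linear_combination hh
    field_simp
    ring
  have hsum : Summable (fun m : ℕ => ‖1 / ((m : ℂ) + (c : ℂ) + 1) - 1 / ((m : ℂ) + (c : ℂ) + 2)‖) := by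
    have hg2 : Summable (fun n : ℕ => 1 / ((n : ℝ) + 1) ^ 2) := by
      have h := (Real.summable_one_div_nat_pow (p := 2)).2 (by norm_num)
      have h2 := (summable_nat_add_iff (f := fun n : ℕ => 1 / (n : ℝ) ^ 2) 1).2 h
      refine h2.congr fun n => ?_
      push_cast; ring
    refine Summable.of_nonneg_of_le (fun m => norm_nonneg _) (fun m => ?_) hg2
    · 
      rw [hval m, norm_div, norm_one, norm_mul]
      have e1 : ‖((m : ℂ) + (c : ℂ) + 1)‖ = (m : ℝ) + (c : ℝ) + 1 := by
        rw [show ((m : ℂ) + (c : ℂ) + 1) = ((m + c + 1 : ℕ) : ℂ) by push_cast; ring,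
          Complex.norm_natCast]; push_cast; ring
      have e2 : ‖((m : ℂ) + (c : ℂ) + 2)‖ = (m : ℝ) + (c : ℝ) + 2 := by
        rw [show ((m : ℂ) + (c : ℂ) + 2) = ((m + c + 2 : ℕ) : ℂ) by push_cast; ring,
          Complex.norm_natCast]; push_cast; ring
      rw [e1, e2]
      have h1 : (0:ℝ) ≤ (m:ℝ) := Nat.cast_nonneg _
      have h2 : (0:ℝ) ≤ (c:ℝ) := Nat.cast_nonneg _
      apply div_le_div₀ (by norm_num) le_rfl (by positivity)
      nlinarith
  rw [hasSum_iff_tendsto_nat_of_summable_norm hsum]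
  have hpartial : ∀ M : ℕ, ∑ m ∈ Finset.range M,
      (1 / ((m : ℂ) + (c : ℂ) + 1) - 1 / ((m : ℂ) + (c : ℂ) + 2))
      = 1 / ((c : ℂ) + 1) - 1 / ((M : ℂ) + (c : ℂ) + 1) := by
    intro M
    have h := Finset.sum_range_sub' (f := fun m : ℕ => 1 / ((m : ℂ) + (c : ℂ) + 1)) M
    refine Eq.trans (Finset.sum_congr rfl fun i _ => ?_) (h.trans ?_)
    · show _ = 1 / ((i : ℂ) + (c:ℂ) + 1) - 1 / (((i+1 : ℕ) : ℂ) + (c:ℂ) + 1)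
      push_cast
      ring_nf
    · push_cast
      ring_nf
  · simp only [hpartial]
    have htend : Tendsto (fun M : ℕ => 1 / ((M : ℂ) + (c : ℂ) + 1)) atTop (𝓝 0) := by
      have hr : Tendsto (fun M : ℕ => 1 / ((M : ℝ) + ((c : ℝ) + 1))) atTop (𝓝 0) := by
        apply squeeze_zero (fun M => by positivity) (g := fun M : ℕ => 1 / ((M : ℝ) + 1))
          (fun M => ?_) tendsto_one_div_add_atTop_nhds_zero_nat
        apply one_div_le_one_div_of_le (by positivity)
        have : (0:ℝ) ≤ (c:ℝ) := Nat.cast_nonneg _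
        linarith
      have := (Complex.continuous_ofReal.tendsto 0).comp hr
      rw [Complex.ofReal_zero] at this
      convert this using 2 with M
      · simp only [Function.comp_apply, one_div, Complex.ofReal_inv]
        push_cast
        ring_nf
    have := (tendsto_const_nhds (x := 1 / ((c : ℂ) + 1)) (f := atTop (α := ℕ))).sub htend
    simpa using this

lemma tele (N : ℕ) :
    ∑' m : ℕ, (1 / ((m : ℂ) + 1) - 1 / ((m : ℂ) + (N : ℂ) + 1))
      = ∑ i ∈ Finset.range N, 1 / ((i : ℂ) + 1) := by
  have hterm : ∀ m : ℕ, 1 / ((m : ℂ) + 1) - 1 / ((m : ℂ) + (N : ℂ) + 1)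
      = ∑ i ∈ Finset.range N, (1 / ((m : ℂ) + (i : ℂ) + 1) - 1 / ((m : ℂ) + (i : ℂ) + 2)) := by
    intro m
    have h := Finset.sum_range_sub' (f := fun i : ℕ => 1 / ((m : ℂ) + (i : ℂ) + 1)) N
    rw [show (1 / ((m : ℂ) + 1) - 1 / ((m : ℂ) + (N : ℂ) + 1))
        = (fun i : ℕ => 1 / ((m : ℂ) + (i : ℂ) + 1)) 0
          - (fun i : ℕ => 1 / ((m : ℂ) + (i : ℂ) + 1)) N by simp, ← h]
    refine Finset.sum_congr rfl fun i _ => ?_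
    push_cast
    ring_nf
  calc ∑' m : ℕ, (1 / ((m : ℂ) + 1) - 1 / ((m : ℂ) + (N : ℂ) + 1))
      = ∑' m : ℕ, ∑ i ∈ Finset.range N, (1 / ((m : ℂ) + (i : ℂ) + 1) - 1 / ((m : ℂ) + (i : ℂ) + 2)) := by
        exact tsum_congr hterm
    _ = ∑ i ∈ Finset.range N, ∑' m : ℕ, (1 / ((m : ℂ) + (i : ℂ) + 1) - 1 / ((m : ℂ) + (i : ℂ) + 2)) := by
        apply Summable.tsum_finsetSum
        intro i _
        exact (tele_one i).summable
    _ = ∑ i ∈ Finset.range N, 1 / ((i : ℂ) + 1) := by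
        refine Finset.sum_congr rfl fun i _ => (tele_one i).tsum_eq

section
variable (x : ℂ) (hx : ‖x‖ ≤ 1)

include hx in
lemma SB {k : ℕ} (hk : 1 ≤ k) :
    Summable (fun p : ℕ × ℕ => x ^ (p.2 + 1) /
      (((p.1 : ℂ) + 1) ^ 2 * ((p.1 : ℂ) + 1 + ((p.2 : ℂ) + 1)) ^ (k + 1))) := by
  apply sumP
  intro p
  rw [norm_div, norm_mul, norm_pow, norm_pow, norm_pow, norm1, norm2,
    one_div_mul_one_div]
  have h1 : (0:ℝ) ≤ (p.1:ℝ) := Nat.cast_nonneg _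
  have h2 : (0:ℝ) ≤ (p.2:ℝ) := Nat.cast_nonneg _
  apply div_le_div₀ (by norm_num) (pow_le_one₀ (norm_nonneg x) hx) (by positivity)
  calc ((p.1 : ℝ) + 1) ^ 2 * ((p.2 : ℝ) + 1) ^ 2
      ≤ ((p.1 : ℝ) + 1) ^ 2 * ((p.1 : ℝ) + (p.2 : ℝ) + 2) ^ (k + 1) := by
        apply mul_le_mul_of_nonneg_left _ (by positivity)
        calc ((p.2 : ℝ) + 1) ^ 2 ≤ ((p.1 : ℝ) + (p.2 : ℝ) + 2) ^ 2 := by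
              apply pow_le_pow_left₀ (by positivity); linarith
          _ ≤ ((p.1 : ℝ) + (p.2 : ℝ) + 2) ^ (k + 1) := by
              apply pow_le_pow_right₀ (by linarith) (by omega)
    _ = _ := rfl

include hx in
lemma SC {k : ℕ} (hk : 1 ≤ k) :
    Summable (fun p : ℕ × ℕ => x ^ (p.1 + 1 + (p.2 + 1)) /
      (((p.1 : ℂ) + 1) * ((p.1 : ℂ) + 1 + ((p.2 : ℂ) + 1)) ^ (k + 2))) := by
  apply sumP
  intro p
  rw [norm_div, norm_mul, norm_pow, norm_pow, norm1, norm2,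
    one_div_mul_one_div]
  have h1 : (0:ℝ) ≤ (p.1:ℝ) := Nat.cast_nonneg _
  have h2 : (0:ℝ) ≤ (p.2:ℝ) := Nat.cast_nonneg _
  apply div_le_div₀ (by norm_num) (pow_le_one₀ (norm_nonneg x) hx) (by positivity)
  have key : ((p.1 : ℝ) + 1) * ((p.2 : ℝ) + 1) ^ 2 ≤ ((p.1 : ℝ) + (p.2 : ℝ) + 2) ^ 3 := by
    calc ((p.1 : ℝ) + 1) * ((p.2 : ℝ) + 1) ^ 2
        ≤ ((p.1 : ℝ) + (p.2 : ℝ) + 2) * ((p.1 : ℝ) + (p.2 : ℝ) + 2) ^ 2 := by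
          apply mul_le_mul (by linarith) (pow_le_pow_left₀ (by positivity) (by linarith) 2)
            (by positivity) (by positivity)
      _ = _ := by ring
  calc ((p.1 : ℝ) + 1) ^ 2 * ((p.2 : ℝ) + 1) ^ 2
      = ((p.1 : ℝ) + 1) * (((p.1 : ℝ) + 1) * ((p.2 : ℝ) + 1) ^ 2) := by ring
    _ ≤ ((p.1 : ℝ) + 1) * ((p.1 : ℝ) + (p.2 : ℝ) + 2) ^ 3 := by
        apply mul_le_mul_of_nonneg_left key (by positivity)
    _ ≤ ((p.1 : ℝ) + 1) * ((p.1 : ℝ) + (p.2 : ℝ) + 2) ^ (k + 2) := by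
        apply mul_le_mul_of_nonneg_left
          (pow_le_pow_right₀ (by linarith) (show 3 ≤ k + 2 by omega)) (by positivity)

include hx in
lemma SD {k : ℕ} (hk : 1 ≤ k) :
    Summable (fun p : ℕ × ℕ => x ^ (p.2 + 1) /
      (((p.1 : ℂ) + 1) ^ 2 * ((p.2 : ℂ) + 1) ^ (k + 1))) := by
  apply sumP
  intro p
  rw [norm_div, norm_mul, norm_pow, norm_pow, norm_pow, norm1, norm1,
    one_div_mul_one_div]
  have h2 : (0:ℝ) ≤ (p.2:ℝ) := Nat.cast_nonneg _
  apply div_le_div₀ (by norm_num) (pow_le_one₀ (norm_nonneg x) hx) (by positivity)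
  apply mul_le_mul_of_nonneg_left _ (by positivity)
  apply pow_le_pow_right₀ (by linarith) (by omega)

include hx in
lemma SZ {s : ℕ} (hs : 2 ≤ s) :
    Summable (fun n : ℕ => x ^ (n + 1) / ((n : ℂ) + 1) ^ s) := by
  apply Summable.of_norm_bounded s1
  intro n
  rw [norm_div, norm_pow, norm_pow, norm1]
  have h2 : (0:ℝ) ≤ (n:ℝ) := Nat.cast_nonneg _
  apply div_le_div₀ (by norm_num) (pow_le_one₀ (norm_nonneg x) hx) (by positivity)
  apply pow_le_pow_right₀ (by linarith) hs

include hx in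
lemma SH {k : ℕ} (hk : 1 ≤ k) (f : ℕ → ℕ) (hf : ∀ n, f n ≤ n + 1) :
    Summable (fun n : ℕ => x ^ (n + 1) * (∑ i ∈ Finset.range (f n), 1 / ((i : ℂ) + 1))
      / ((n : ℂ) + 1) ^ (k + 2)) := by
  apply Summable.of_norm_bounded s1
  intro n
  rw [norm_div, norm_mul, norm_pow, norm_pow, norm1]
  have h2 : (0:ℝ) ≤ (n:ℝ) := Nat.cast_nonneg _
  have hnorm : ‖∑ i ∈ Finset.range (f n), 1 / ((i : ℂ) + 1)‖ ≤ (n : ℝ) + 1 := by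
    calc ‖∑ i ∈ Finset.range (f n), 1 / ((i : ℂ) + 1)‖
        ≤ ∑ i ∈ Finset.range (f n), ‖1 / ((i : ℂ) + 1)‖ := norm_sum_le _ _
      _ ≤ ∑ _i ∈ Finset.range (f n), (1:ℝ) := by
          apply Finset.sum_le_sum
          intro i _
          rw [norm_div, norm_one, norm1]
          rw [div_le_one (by positivity)]
          linarith [Nat.cast_nonneg (α := ℝ) i]
      _ = (f n : ℝ) := by simp
      _ ≤ (n : ℝ) + 1 := by exact_mod_cast hf n
  calc ‖x‖ ^ (n + 1) * ‖∑ i ∈ Finset.range (f n), 1 / ((i : ℂ) + 1)‖ / ((n:ℝ) + 1) ^ (k + 2)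
      ≤ 1 * ((n:ℝ) + 1) / ((n:ℝ) + 1) ^ (k + 2) := by
        apply div_le_div₀ (by positivity)
          (mul_le_mul (pow_le_one₀ (norm_nonneg x) hx) hnorm (norm_nonneg _) (by norm_num))
          (by positivity) le_rfl
    _ ≤ 1 / ((n:ℝ) + 1) ^ 2 := by
        rw [one_mul]
        rw [div_le_div_iff₀ (by positivity) (by positivity)]
        calc ((n:ℝ) + 1) * ((n:ℝ) + 1) ^ 2 = ((n:ℝ) + 1) ^ 3 := by ring
          _ ≤ ((n:ℝ) + 1) ^ (k + 2) := pow_le_pow_right₀ (by linarith) (by omega)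
          _ = 1 * ((n:ℝ) + 1) ^ (k + 2) := by ring
    _ = _ := rfl
end


section
variable (x : ℂ) (k : ℕ)

-- C reindexing
lemma Cval (hC : Summable (fun p : ℕ × ℕ => x ^ (p.1 + 1 + (p.2 + 1)) /
      (((p.1 : ℂ) + 1) * ((p.1 : ℂ) + 1 + ((p.2 : ℂ) + 1)) ^ (k + 2)))) :
    (∑' p : ℕ × ℕ, x ^ (p.1 + 1 + (p.2 + 1)) /
      (((p.1 : ℂ) + 1) * ((p.1 : ℂ) + 1 + ((p.2 : ℂ) + 1)) ^ (k + 2)))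
    = ∑' n : ℕ, x ^ (n + 1) * (∑ i ∈ Finset.range n, 1 / ((i : ℂ) + 1)) / ((n : ℂ) + 1) ^ (k + 2) := by
  set h : ℕ × ℕ → ℂ := fun q =>
    if q.1 < q.2 then x ^ (q.2 + 1) / (((q.1 : ℂ) + 1) * ((q.2 : ℂ) + 1) ^ (k + 2)) else 0 with hh
  have hφinj : Function.Injective (fun p : ℕ × ℕ => (p.1, p.1 + p.2 + 1)) := by
    intro p q hpq
    simp only [Prod.mk.injEq] at hpq
    obtain ⟨h1, h2⟩ := hpq
    exact Prod.ext h1 (by omega)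
  have hsupp : Function.support h ⊆ Set.range (fun p : ℕ × ℕ => (p.1, p.1 + p.2 + 1)) := by
    intro q hq
    simp only [Function.mem_support, hh] at hq
    by_cases hlt : q.1 < q.2
    · exact ⟨(q.1, q.2 - q.1 - 1), by simp only; rw [Prod.ext_iff]; constructor <;> simp <;> omega⟩
    · exact absurd (if_neg hlt) hq
  have hcomp : ∀ p : ℕ × ℕ, h ((fun p : ℕ × ℕ => (p.1, p.1 + p.2 + 1)) p)
      = x ^ (p.1 + 1 + (p.2 + 1)) /
        (((p.1 : ℂ) + 1) * ((p.1 : ℂ) + 1 + ((p.2 : ℂ) + 1)) ^ (k + 2)) := by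
    intro p
    simp only [hh, if_pos (show p.1 < p.1 + p.2 + 1 by omega)]
    rw [show p.1 + p.2 + 1 + 1 = p.1 + 1 + (p.2 + 1) by omega]
    push_cast
    rw [show ((p.1:ℂ) + (p.2:ℂ) + 1 + 1) = ((p.1:ℂ) + 1 + ((p.2:ℂ) + 1)) by ring]
  have key := Function.Injective.tsum_eq hφinj (f := h) hsupp
  have hstep : (∑' p : ℕ × ℕ, x ^ (p.1 + 1 + (p.2 + 1)) /
      (((p.1 : ℂ) + 1) * ((p.1 : ℂ) + 1 + ((p.2 : ℂ) + 1)) ^ (k + 2))) = ∑' q, h q := by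
    rw [← key]
    exact tsum_congr fun p => (hcomp p).symm
  rw [hstep]
  have hhsummable : Summable h := by
    rw [← Function.Injective.summable_iff hφinj (fun q hq => Function.notMem_support.mp (fun hs => hq (hsupp hs)))]
    exact hC.congr fun p => (hcomp p).symm
  have hswap : ∑' q, h q = ∑' q : ℕ × ℕ, h (q.2, q.1) := by
    rw [← (Equiv.prodComm ℕ ℕ).tsum_eq (f := h)]
    rfl
  rw [hswap]
  have hsw2 : Summable (fun q : ℕ × ℕ => h (q.2, q.1)) := by
    rw [show (fun q : ℕ × ℕ => h (q.2, q.1)) = h ∘ (Equiv.prodComm ℕ ℕ) from rfl,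
      Equiv.summable_iff]
    exact hhsummable
  rw [Summable.tsum_prod' hsw2 hsw2.prod_factor]
  refine tsum_congr fun n => ?_
  rw [tsum_eq_sum (s := Finset.range n) (f := fun i : ℕ => h (i, n))
    (by intro i hi; simp only [hh]; rw [if_neg]; simpa using hi)]
  rw [Finset.mul_sum, Finset.sum_div]
  refine Finset.sum_congr rfl fun i hi => ?_
  simp only [hh, if_pos (Finset.mem_range.1 hi)]
  rw [mul_one_div, div_div]
end


section
variable (x : ℂ) (hx : ‖x‖ ≤ 1) (k : ℕ)

-- E evaluation
lemma Eval (hE : Summable (fun p : ℕ × ℕ => x ^ (p.2 + 1) *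
      (((k : ℂ) + 1) * (1 / ((p.1 : ℂ) + 1) - 1 / ((p.1 : ℂ) + 1 + ((p.2 : ℂ) + 1)))
        / ((p.2 : ℂ) + 1) ^ (k + 2)))) :
    (∑' p : ℕ × ℕ, x ^ (p.2 + 1) *
      (((k : ℂ) + 1) * (1 / ((p.1 : ℂ) + 1) - 1 / ((p.1 : ℂ) + 1 + ((p.2 : ℂ) + 1)))
        / ((p.2 : ℂ) + 1) ^ (k + 2)))
    = ((k : ℂ) + 1) * ∑' n : ℕ, x ^ (n + 1) * (∑ i ∈ Finset.range (n + 1), 1 / ((i : ℂ) + 1))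
        / ((n : ℂ) + 1) ^ (k + 2) := by
  set f : ℕ × ℕ → ℂ := fun p => x ^ (p.2 + 1) *
      (((k : ℂ) + 1) * (1 / ((p.1 : ℂ) + 1) - 1 / ((p.1 : ℂ) + 1 + ((p.2 : ℂ) + 1)))
        / ((p.2 : ℂ) + 1) ^ (k + 2)) with hf
  have hswap : ∑' p, f p = ∑' q : ℕ × ℕ, f (q.2, q.1) := by
    rw [← (Equiv.prodComm ℕ ℕ).tsum_eq (f := f)]; rfl
  have hsw2 : Summable (fun q : ℕ × ℕ => f (q.2, q.1)) := by
    rw [show (fun q : ℕ × ℕ => f (q.2, q.1)) = f ∘ (Equiv.prodComm ℕ ℕ) from rfl,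
      Equiv.summable_iff]
    exact hE
  rw [hswap, Summable.tsum_prod' hsw2 hsw2.prod_factor, ← tsum_mul_left]
  refine tsum_congr fun n => ?_
  -- inner sum over m
  have hinner : ∀ m : ℕ, f (m, n)
      = (x ^ (n + 1) * (((k : ℂ) + 1) / ((n : ℂ) + 1) ^ (k + 2)))
        * (1 / ((m : ℂ) + 1) - 1 / ((m : ℂ) + ((n + 1 : ℕ) : ℂ) + 1)) := by
    intro m
    simp only [hf]
    push_cast
    ring
  calc ∑' m : ℕ, f (m, n)
      = ∑' m : ℕ, (x ^ (n + 1) * (((k : ℂ) + 1) / ((n : ℂ) + 1) ^ (k + 2)))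
        * (1 / ((m : ℂ) + 1) - 1 / ((m : ℂ) + ((n + 1 : ℕ) : ℂ) + 1)) := tsum_congr hinner
    _ = (x ^ (n + 1) * (((k : ℂ) + 1) / ((n : ℂ) + 1) ^ (k + 2)))
        * ∑' m : ℕ, (1 / ((m : ℂ) + 1) - 1 / ((m : ℂ) + ((n + 1 : ℕ) : ℂ) + 1)) := tsum_mul_left
    _ = (x ^ (n + 1) * (((k : ℂ) + 1) / ((n : ℂ) + 1) ^ (k + 2)))
        * ∑ i ∈ Finset.range (n + 1), 1 / ((i : ℂ) + 1) := by rw [tele (n + 1)]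
    _ = ((k : ℂ) + 1) * (x ^ (n + 1) * (∑ i ∈ Finset.range (n + 1), 1 / ((i : ℂ) + 1))
        / ((n : ℂ) + 1) ^ (k + 2)) := by ring

include hx in
lemma SZ' {s : ℕ} (hs : 2 ≤ s) :
    Summable (fun n : ℕ => ‖x ^ (n + 1) / ((n : ℂ) + 1) ^ s‖) := by
  apply Summable.of_nonneg_of_le (fun n => norm_nonneg _) (fun n => ?_) s1
  rw [norm_div, norm_pow, norm_pow, norm1]
  have h2 : (0:ℝ) ≤ (n:ℝ) := Nat.cast_nonneg _
  apply div_le_div₀ (by norm_num) (pow_le_one₀ (norm_nonneg x) hx) (by positivity)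
  apply pow_le_pow_right₀ (by linarith) hs

include hx in
lemma Dval (hk : 1 ≤ k) :
    (∑' p : ℕ × ℕ, x ^ (p.2 + 1) / (((p.1 : ℂ) + 1) ^ 2 * ((p.2 : ℂ) + 1) ^ (k + 1)))
    = riemannZeta 2 * ∑' n : ℕ, x ^ (n + 1) / ((n : ℂ) + 1) ^ (k + 1) := by
  have hz : riemannZeta 2 = ∑' m : ℕ, 1 / ((m : ℂ) + 1) ^ 2 := by
    rw [zeta_eq_tsum_one_div_nat_add_one_cpow (by norm_num)]
    refine tsum_congr fun m => ?_
    rw [show (2 : ℂ) = ((2 : ℕ) : ℂ) by norm_num, Complex.cpow_natCast]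
  have hfn : Summable (fun m : ℕ => ‖1 / ((m : ℂ) + 1) ^ 2‖) := by
    refine s1.congr fun m => ?_
    rw [norm_div, norm_one, norm_pow, norm1]
  have hgn := SZ' x hx (s := k + 1) (by omega)
  rw [hz, tsum_mul_tsum_of_summable_norm hfn hgn]
  refine (tsum_congr fun p => ?_).symm
  rw [div_mul_div_comm, one_mul]
end

end Prop31Aux

theorem proposition_3_1 (k : ℕ) (hk : 1 ≤ k) (x : ℂ) (hx : ‖x‖ ≤ 1) :
    (∑ ν ∈ Finset.Icc 2 (k + 1), ((k + 2 - ν : ℕ) : ℂ) * ∑' p : ℕ × ℕ,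
        x ^ (p.2 + 1) /
          (((p.2 : ℂ) + 1) ^ (k + 3 - ν) * ((p.1 : ℂ) + 1 + ((p.2 : ℂ) + 1)) ^ ν))
      - (∑' p : ℕ × ℕ, x ^ (p.2 + 1) /
          (((p.1 : ℂ) + 1) ^ 2 * ((p.1 : ℂ) + 1 + ((p.2 : ℂ) + 1)) ^ (k + 1)))
      - ((k : ℂ) + 1) * (∑' p : ℕ × ℕ, x ^ (p.1 + 1 + (p.2 + 1)) /
          (((p.1 : ℂ) + 1) * ((p.1 : ℂ) + 1 + ((p.2 : ℂ) + 1)) ^ (k + 2)))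
      = ((k : ℂ) + 1) * (∑' n : ℕ, x ^ (n + 1) / ((n : ℂ) + 1) ^ (k + 3))
        - riemannZeta 2 * ∑' n : ℕ, x ^ (n + 1) / ((n : ℂ) + 1) ^ (k + 1) := by
  classical
  have hone : ∀ ν ∈ Finset.Icc 2 (k + 1), 2 ≤ k + 3 - ν ∧ 2 ≤ ν := by
    intro ν hν; simp only [Finset.mem_Icc] at hν; omega
  have hSA : ∀ ν ∈ Finset.Icc 2 (k + 1), Summable (fun p : ℕ × ℕ =>
      ((k + 2 - ν : ℕ) : ℂ) * (x ^ (p.2 + 1) /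
        (((p.2 : ℂ) + 1) ^ (k + 3 - ν) * ((p.1 : ℂ) + 1 + ((p.2 : ℂ) + 1)) ^ ν))) := by
    intro ν hν
    exact (Prop31Aux.Sab x hx (hone ν hν).1 (hone ν hν).2).mul_left _
  have hSAsum : Summable (fun p : ℕ × ℕ => ∑ ν ∈ Finset.Icc 2 (k + 1),
      ((k + 2 - ν : ℕ) : ℂ) * (x ^ (p.2 + 1) /
        (((p.2 : ℂ) + 1) ^ (k + 3 - ν) * ((p.1 : ℂ) + 1 + ((p.2 : ℂ) + 1)) ^ ν))) :=
    summable_sum hSA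
  have hB := Prop31Aux.SB x hx hk
  have hC := Prop31Aux.SC x hx (k := k) hk
  have hD := Prop31Aux.SD x hx hk
  have hpt : ∀ p : ℕ × ℕ,
      (∑ ν ∈ Finset.Icc 2 (k + 1), ((k + 2 - ν : ℕ) : ℂ) * (x ^ (p.2 + 1) /
        (((p.2 : ℂ) + 1) ^ (k + 3 - ν) * ((p.1 : ℂ) + 1 + ((p.2 : ℂ) + 1)) ^ ν)))
      - x ^ (p.2 + 1) / (((p.1 : ℂ) + 1) ^ 2 * ((p.1 : ℂ) + 1 + ((p.2 : ℂ) + 1)) ^ (k + 1))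
      + x ^ (p.2 + 1) / (((p.1 : ℂ) + 1) ^ 2 * ((p.2 : ℂ) + 1) ^ (k + 1))
      = x ^ (p.2 + 1) * (((k : ℂ) + 1) *
          (1 / ((p.1 : ℂ) + 1) - 1 / ((p.1 : ℂ) + 1 + ((p.2 : ℂ) + 1)))
          / ((p.2 : ℂ) + 1) ^ (k + 2)) := by
    intro p
    have hm : ((p.1 : ℂ) + 1) ≠ 0 := Prop31Aux.cast_ne' _
    have hn : ((p.2 : ℂ) + 1) ≠ 0 := Prop31Aux.cast_ne' _
    have hmn : ((p.1 : ℂ) + 1 + ((p.2 : ℂ) + 1)) ≠ 0 := by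
      intro hh; apply Prop31Aux.cast_ne' (p.1 + p.2 + 1); push_cast; linear_combination hh
    have h := Prop31Aux.ptwise k ((p.1 : ℂ) + 1) ((p.2 : ℂ) + 1) hm hn hmn
    have hexp : ∑ ν ∈ Finset.Icc 2 (k + 1), ((k + 2 - ν : ℕ) : ℂ) * (x ^ (p.2 + 1) /
        (((p.2 : ℂ) + 1) ^ (k + 3 - ν) * ((p.1 : ℂ) + 1 + ((p.2 : ℂ) + 1)) ^ ν))
        = x ^ (p.2 + 1) * ∑ ν ∈ Finset.Icc 2 (k + 1), ((k + 2 - ν : ℕ) : ℂ) /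
          (((p.2 : ℂ) + 1) ^ (k + 3 - ν) * ((p.1 : ℂ) + 1 + ((p.2 : ℂ) + 1)) ^ ν) := by
      rw [Finset.mul_sum]
      exact Finset.sum_congr rfl fun ν _ => by ring
    rw [hexp]
    linear_combination (x ^ (p.2 + 1)) * h
  have hAB : Summable (fun p : ℕ × ℕ => (∑ ν ∈ Finset.Icc 2 (k + 1),
      ((k + 2 - ν : ℕ) : ℂ) * (x ^ (p.2 + 1) /
        (((p.2 : ℂ) + 1) ^ (k + 3 - ν) * ((p.1 : ℂ) + 1 + ((p.2 : ℂ) + 1)) ^ ν)))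
      - x ^ (p.2 + 1) / (((p.1 : ℂ) + 1) ^ 2 * ((p.1 : ℂ) + 1 + ((p.2 : ℂ) + 1)) ^ (k + 1))) :=
    hSAsum.sub hB
  have hEsum : Summable (fun p : ℕ × ℕ => x ^ (p.2 + 1) * (((k : ℂ) + 1) *
      (1 / ((p.1 : ℂ) + 1) - 1 / ((p.1 : ℂ) + 1 + ((p.2 : ℂ) + 1)))
      / ((p.2 : ℂ) + 1) ^ (k + 2))) :=
    Summable.congr (hAB.add hD) hpt
  have step1 : (∑ ν ∈ Finset.Icc 2 (k + 1), ((k + 2 - ν : ℕ) : ℂ) * ∑' p : ℕ × ℕ,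
        x ^ (p.2 + 1) /
          (((p.2 : ℂ) + 1) ^ (k + 3 - ν) * ((p.1 : ℂ) + 1 + ((p.2 : ℂ) + 1)) ^ ν))
      = ∑' p : ℕ × ℕ, ∑ ν ∈ Finset.Icc 2 (k + 1), ((k + 2 - ν : ℕ) : ℂ) * (x ^ (p.2 + 1) /
          (((p.2 : ℂ) + 1) ^ (k + 3 - ν) * ((p.1 : ℂ) + 1 + ((p.2 : ℂ) + 1)) ^ ν)) := by
    calc _ = ∑ ν ∈ Finset.Icc 2 (k + 1), ∑' p : ℕ × ℕ, ((k + 2 - ν : ℕ) : ℂ) * (x ^ (p.2 + 1) /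
          (((p.2 : ℂ) + 1) ^ (k + 3 - ν) * ((p.1 : ℂ) + 1 + ((p.2 : ℂ) + 1)) ^ ν)) :=
        Finset.sum_congr rfl fun ν _ => tsum_mul_left.symm
      _ = _ := (Summable.tsum_finsetSum hSA).symm
  rw [step1]
  have main : (∑' p : ℕ × ℕ, ∑ ν ∈ Finset.Icc 2 (k + 1), ((k + 2 - ν : ℕ) : ℂ) * (x ^ (p.2 + 1) /
          (((p.2 : ℂ) + 1) ^ (k + 3 - ν) * ((p.1 : ℂ) + 1 + ((p.2 : ℂ) + 1)) ^ ν)))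
      - (∑' p : ℕ × ℕ, x ^ (p.2 + 1) /
          (((p.1 : ℂ) + 1) ^ 2 * ((p.1 : ℂ) + 1 + ((p.2 : ℂ) + 1)) ^ (k + 1)))
      = ((k : ℂ) + 1) * (∑' n : ℕ, x ^ (n + 1) *
          (∑ i ∈ Finset.range (n + 1), 1 / ((i : ℂ) + 1)) / ((n : ℂ) + 1) ^ (k + 2))
        - riemannZeta 2 * ∑' n : ℕ, x ^ (n + 1) / ((n : ℂ) + 1) ^ (k + 1) := by
    have hpt2 : ∀ p : ℕ × ℕ,
        (∑ ν ∈ Finset.Icc 2 (k + 1), ((k + 2 - ν : ℕ) : ℂ) * (x ^ (p.2 + 1) /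
          (((p.2 : ℂ) + 1) ^ (k + 3 - ν) * ((p.1 : ℂ) + 1 + ((p.2 : ℂ) + 1)) ^ ν)))
        - x ^ (p.2 + 1) / (((p.1 : ℂ) + 1) ^ 2 * ((p.1 : ℂ) + 1 + ((p.2 : ℂ) + 1)) ^ (k + 1))
        = x ^ (p.2 + 1) * (((k : ℂ) + 1) *
            (1 / ((p.1 : ℂ) + 1) - 1 / ((p.1 : ℂ) + 1 + ((p.2 : ℂ) + 1)))
            / ((p.2 : ℂ) + 1) ^ (k + 2))
          - x ^ (p.2 + 1) / (((p.1 : ℂ) + 1) ^ 2 * ((p.2 : ℂ) + 1) ^ (k + 1)) := by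
      intro p
      linear_combination hpt p
    rw [← Summable.tsum_sub hSAsum hB, tsum_congr hpt2,
      Summable.tsum_sub hEsum hD, Prop31Aux.Eval x k hEsum, Prop31Aux.Dval x hx k hk]
  rw [main, Prop31Aux.Cval x k hC]
  have hdiff : (∑' n : ℕ, x ^ (n + 1) *
        (∑ i ∈ Finset.range (n + 1), 1 / ((i : ℂ) + 1)) / ((n : ℂ) + 1) ^ (k + 2))
      - (∑' n : ℕ, x ^ (n + 1) *
        (∑ i ∈ Finset.range n, 1 / ((i : ℂ) + 1)) / ((n : ℂ) + 1) ^ (k + 2))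
      = ∑' n : ℕ, x ^ (n + 1) / ((n : ℂ) + 1) ^ (k + 3) := by
    rw [← Summable.tsum_sub (Prop31Aux.SH x hx hk (fun n => n + 1) (fun n => le_rfl))
      (Prop31Aux.SH x hx hk (fun n => n) (fun n => Nat.le_succ n))]
    refine tsum_congr fun n => ?_
    rw [Finset.sum_range_succ]
    have hn : ((n : ℂ) + 1) ≠ 0 := Prop31Aux.cast_ne' n
    field_simp
    ring
  linear_combination ((k : ℂ) + 1) * hdiff
end
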